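/- arXiv:2010.06297 — 4 statements merged into one kernel-verified Lean document; each statement's English description precedes it below -/
import Mathlib

section
/- The function a ↦ a^ν I_ν(x/a) is monotonically decreasing on [1, ∞) for any fixed x > 0 and ν ≥ 0, where I_ν is the modified Bessel function of the first kind. -/
/-- Modified Bessel function of the first kind `I_ν(x)` (for `x > 0`). -/
noncomputable def besselI (ν x : ℝ) : ℝ :=
  ∑' m : ℕ, (x / 2) ^ ((2 * m : ℝ) + ν) / (m.factorial * Real.Gamma (m + ν + 1))

lemma fact_mul_gamma_le (ν : ℝ) (hν : 0 ≤ ν) :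
    ∀ m : ℕ, (m.factorial : ℝ) * Real.Gamma (ν + 1) ≤ Real.Gamma (m + ν + 1) := by
  intro m
  induction m with
  | zero => simp
  | succ n ih =>
    have hne : (n : ℝ) + ν + 1 ≠ 0 := by positivity
    have h1 : Real.Gamma (((n + 1 : ℕ) : ℝ) + ν + 1)
        = ((n : ℝ) + ν + 1) * Real.Gamma ((n : ℝ) + ν + 1) := by
      rw [show ((n + 1 : ℕ) : ℝ) + ν + 1 = ((n : ℝ) + ν + 1) + 1 by push_cast; ring,
        Real.Gamma_add_one hne]
    rw [h1]
    have hfac : ((n + 1 : ℕ).factorial : ℝ) = ((n : ℝ) + 1) * (n.factorial : ℝ) := by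
      push_cast [Nat.factorial_succ]; ring
    rw [hfac]
    have hG : 0 ≤ Real.Gamma ((n : ℝ) + ν + 1) :=
      (Real.Gamma_pos_of_pos (by positivity)).le
    calc ((n : ℝ) + 1) * (n.factorial : ℝ) * Real.Gamma (ν + 1)
        = ((n : ℝ) + 1) * ((n.factorial : ℝ) * Real.Gamma (ν + 1)) := by ring
      _ ≤ ((n : ℝ) + 1) * Real.Gamma ((n : ℝ) + ν + 1) := by
          exact mul_le_mul_of_nonneg_left ih (by positivity)
      _ ≤ ((n : ℝ) + ν + 1) * Real.Gamma ((n : ℝ) + ν + 1) := by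
          exact mul_le_mul_of_nonneg_right (by linarith) hG

lemma summable_bessel_terms (ν : ℝ) (hν : 0 ≤ ν) (r : ℝ) (hr : 0 ≤ r) :
    Summable (fun m : ℕ => r ^ m / ((m.factorial : ℝ) * Real.Gamma ((m : ℝ) + ν + 1))) := by
  have hG1 : 0 < Real.Gamma (ν + 1) := Real.Gamma_pos_of_pos (by linarith)
  refine Summable.of_nonneg_of_le (fun m => by positivity) (fun m => ?_)
    ((Real.summable_pow_div_factorial r).mul_right (Real.Gamma (ν + 1))⁻¹)
  have hfac : (1 : ℝ) ≤ m.factorial := by exact_mod_cast m.factorial_pos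
  have hle := fact_mul_gamma_le ν hν m
  have hGm : 0 < Real.Gamma ((m : ℝ) + ν + 1) := Real.Gamma_pos_of_pos (by positivity)
  rw [← div_eq_mul_inv, div_div]
  gcongr
  nlinarith

lemma rpow_mul_besselI_eq (ν : ℝ) (x : ℝ) (hx : 0 < x) (a : ℝ) (ha : 1 ≤ a) :
    a ^ ν * besselI ν (x / a) =
      ∑' m : ℕ, (x / 2) ^ ((2 * m : ℝ) + ν) / ((m.factorial : ℝ) * Real.Gamma ((m : ℝ) + ν + 1))
        * ((a ^ 2) ^ m)⁻¹ := by
  have ha0 : 0 < a := lt_of_lt_of_le one_pos ha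
  have hc : 0 < x / 2 := by linarith
  rw [besselI, ← tsum_mul_left]
  congr 1
  ext m
  have hxa : x / a / 2 = (x / 2) / a := by ring
  rw [hxa, Real.div_rpow hc.le ha0.le]
  have h1 : a ^ ν * ((x / 2) ^ ((2 * m : ℝ) + ν) / a ^ ((2 * m : ℝ) + ν)
      / ((m.factorial : ℝ) * Real.Gamma ((m : ℝ) + ν + 1)))
      = (x / 2) ^ ((2 * m : ℝ) + ν) / ((m.factorial : ℝ) * Real.Gamma ((m : ℝ) + ν + 1))
        * (a ^ ν / a ^ ((2 * m : ℝ) + ν)) := by ring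
  rw [h1]
  congr 1
  rw [← Real.rpow_sub ha0]
  have h2 : ν - ((2 * m : ℝ) + ν) = -(((2 * m : ℕ) : ℝ)) := by push_cast; ring
  rw [h2, Real.rpow_neg ha0.le, Real.rpow_natCast, pow_mul]

/-- For fixed `x > 0` and `ν ≥ 0`, the function `a ↦ a^ν I_ν(x/a)` is monotonically
decreasing on `[1, ∞)`. -/
theorem antitoneOn_rpow_mul_besselI (ν : ℝ) (hν : 0 ≤ ν) (x : ℝ) (hx : 0 < x) :
    AntitoneOn (fun a : ℝ => a ^ ν * besselI ν (x / a)) (Set.Ici 1) := by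
  intro a ha b hb hab
  simp only [Set.mem_Ici] at ha hb
  have ha0 : 0 < a := lt_of_lt_of_le one_pos ha
  have hb0 : 0 < b := lt_of_lt_of_le one_pos hb
  have hc : 0 < x / 2 := by linarith
  set g : ℕ → ℝ := fun m =>
    (x / 2) ^ ((2 * m : ℝ) + ν) / ((m.factorial : ℝ) * Real.Gamma ((m : ℝ) + ν + 1)) with hg
  have hgnn : ∀ m, 0 ≤ g m := fun m => by
    have := Real.Gamma_pos_of_pos (show (0:ℝ) < (m:ℝ) + ν + 1 by positivity)
    positivity
  -- summability of g
  have hgsum : Summable g := by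
    have h := (summable_bessel_terms ν hν ((x / 2) ^ 2) (by positivity)).mul_left
      ((x / 2) ^ ν)
    refine h.congr fun m => ?_
    have : (x / 2) ^ ((2 * m : ℝ) + ν) = (x / 2) ^ ν * ((x / 2) ^ 2) ^ m := by
      rw [← pow_mul, ← Real.rpow_natCast (x/2) (2 * m), ← Real.rpow_add hc]
      congr 1
      push_cast; ring
    simp only [hg, this]
    ring
  have key : ∀ (t : ℝ), 1 ≤ t → Summable (fun m => g m * ((t ^ 2) ^ m)⁻¹) := by
    intro t ht
    apply Summable.of_nonneg_of_le (fun m => ?_) (fun m => ?_) hgsum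
    · have h1 : (0:ℝ) < (t ^ 2) ^ m := by positivity
      exact mul_nonneg (hgnn m) (by positivity)
    · have h1 : (1:ℝ) ≤ (t ^ 2) ^ m := one_le_pow₀ (by nlinarith)
      calc g m * ((t ^ 2) ^ m)⁻¹ ≤ g m * 1 :=
            mul_le_mul_of_nonneg_left (inv_le_one_of_one_le₀ h1) (hgnn m)
        _ = g m := mul_one _
  show b ^ ν * besselI ν (x / b) ≤ a ^ ν * besselI ν (x / a)
  rw [rpow_mul_besselI_eq ν x hx a ha, rpow_mul_besselI_eq ν x hx b hb]
  apply Summable.tsum_le_tsum _ (key b hb) (key a ha)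
  intro m
  apply mul_le_mul_of_nonneg_left _ (hgnn m)
  apply inv_anti₀ (by positivity)
  exact pow_le_pow_left₀ (by positivity) (by nlinarith) m
end

section
/- For all x ≥ √3·π and all real a ≥ 2, one has I_{3/2}(x/a) ≤ (1/4) a^(−3/2) I_{3/2}(x), where I_{3/2} is the modified Bessel function of the first kind of order 3/2. -/
noncomputable def dcoef (m : ℕ) : ℝ :=
  (4 : ℝ)⁻¹ ^ m * (2 : ℝ) ^ (-(3/2 : ℝ)) / (m.factorial * Real.Gamma (m + 5/2))

noncomputable def Dfun (y : ℝ) : ℝ := ∑' m : ℕ, dcoef m * y ^ m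

lemma Gamma_5_2 : Real.Gamma (5/2) = 3/4 * Real.sqrt Real.pi := by
  rw [show (5/2 : ℝ) = 3/2 + 1 by norm_num, Real.Gamma_add_one (by norm_num),
    show (3/2 : ℝ) = 1/2 + 1 by norm_num, Real.Gamma_add_one (by norm_num),
    Real.Gamma_one_half_eq]
  ring

lemma Gamma_9_2 : Real.Gamma (9/2) = 105/16 * Real.sqrt Real.pi := by
  rw [show (9/2 : ℝ) = 7/2 + 1 by norm_num, Real.Gamma_add_one (by norm_num),
    show (7/2 : ℝ) = 5/2 + 1 by norm_num, Real.Gamma_add_one (by norm_num), Gamma_5_2]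
  ring

lemma Gamma_11_2 : Real.Gamma (11/2) = 945/32 * Real.sqrt Real.pi := by
  rw [show (11/2 : ℝ) = 9/2 + 1 by norm_num, Real.Gamma_add_one (by norm_num), Gamma_9_2]
  ring

lemma one_le_Gamma (m : ℕ) : 1 ≤ Real.Gamma (m + 5/2) := by
  induction m with
  | zero =>
    rw [show ((0:ℕ):ℝ) + 5/2 = 5/2 by norm_num, Gamma_5_2]
    nlinarith [Real.sq_sqrt Real.pi_pos.le, Real.sqrt_nonneg Real.pi, Real.pi_gt_three]
  | succ n ih =>
    rw [show ((n+1:ℕ):ℝ) + 5/2 = (↑n + 5/2) + 1 by push_cast; ring,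
      Real.Gamma_add_one (by positivity)]
    nlinarith [n.cast_nonneg (α := ℝ)]

lemma Gamma_shift_pos (m : ℕ) : 0 < Real.Gamma (m + 5/2) :=
  Real.Gamma_pos_of_pos (by positivity)

lemma dcoef_pos (m : ℕ) : 0 < dcoef m := by
  have h1 : (0:ℝ) < m.factorial := by exact_mod_cast m.factorial_pos
  have h2 := Gamma_shift_pos m
  have h3 : (0:ℝ) < (2 : ℝ) ^ (-(3/2 : ℝ)) := Real.rpow_pos_of_pos (by norm_num) _
  unfold dcoef
  positivity

lemma summable_D (y : ℝ) (hy : 0 ≤ y) : Summable (fun m : ℕ => dcoef m * y ^ m) := by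
  apply Summable.of_nonneg_of_le
    (fun m => mul_nonneg (dcoef_pos m).le (pow_nonneg hy m))
    (fun m => ?_) (Real.summable_pow_div_factorial (y/4))
  have h1 : dcoef m * y ^ m
      = (y/4) ^ m * ((2 : ℝ) ^ (-(3/2 : ℝ)) / (m.factorial * Real.Gamma (m + 5/2))) := by
    unfold dcoef
    rw [div_pow]
    ring_nf
    norm_num
  have hF : (1:ℝ) ≤ m.factorial := by exact_mod_cast m.factorial_pos
  have hΓ := one_le_Gamma m
  have hc : (2 : ℝ) ^ (-(3/2 : ℝ)) ≤ 1 :=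
    Real.rpow_le_one_of_one_le_of_nonpos (by norm_num) (by norm_num)
  have h2 : (2 : ℝ) ^ (-(3/2 : ℝ)) / (m.factorial * Real.Gamma (m + 5/2))
      ≤ 1 / (m.factorial : ℝ) := by
    apply div_le_div₀ zero_le_one hc (by linarith)
    nlinarith
  calc dcoef m * y ^ m
      = (y/4) ^ m * ((2 : ℝ) ^ (-(3/2 : ℝ)) / (m.factorial * Real.Gamma (m + 5/2))) := h1
    _ ≤ (y/4) ^ m * (1 / (m.factorial : ℝ)) := by
        apply mul_le_mul_of_nonneg_left h2 (by positivity)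
    _ = (y/4) ^ m / m.factorial := by ring

lemma Dfun_mono {y1 y2 : ℝ} (h0 : 0 ≤ y1) (h : y1 ≤ y2) : Dfun y1 ≤ Dfun y2 :=
  Summable.tsum_le_tsum
    (fun m => mul_le_mul_of_nonneg_left (pow_le_pow_left₀ h0 h m) (dcoef_pos m).le)
    (summable_D _ h0) (summable_D _ (h0.trans h))

lemma besselI_eq (t : ℝ) (ht : 0 < t) :
    besselI (3/2) t = t ^ (3/2 : ℝ) * Dfun (t ^ 2) := by
  unfold besselI Dfun
  rw [← tsum_mul_left]
  congr 1
  funext m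
  have h2 : (0:ℝ) < t/2 := by linarith
  have harg : ((2 * m : ℝ) + 3/2) = ((2*m : ℕ) : ℝ) + (3/2 : ℝ) := by push_cast; ring
  rw [harg, Real.rpow_add h2, Real.rpow_natCast]
  have hpow : (t/2) ^ (2*m) = (4 : ℝ)⁻¹ ^ m * (t^2) ^ m := by
    rw [pow_mul, ← mul_pow]
    congr 1
    ring
  have h32 : (t/2) ^ (3/2 : ℝ) = t ^ (3/2 : ℝ) * (2 : ℝ) ^ (-(3/2 : ℝ)) := by
    rw [Real.div_rpow ht.le (by norm_num), Real.rpow_neg (by norm_num), div_eq_mul_inv]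
  have hG : (↑m + 3/2 + 1 : ℝ) = ↑m + 5/2 := by ring
  rw [hpow, h32, hG]
  unfold dcoef
  ring

lemma key_ineq (y : ℝ) (hy : 27 ≤ y) : 4 * Dfun (y/4) ≤ Dfun y := by
  have hy0 : (0:ℝ) ≤ y := by linarith
  have hy4 : (0:ℝ) ≤ y/4 := by linarith
  have hS := summable_D y hy0
  have hS4 := summable_D (y/4) hy4
  set g : ℕ → ℝ := fun m => dcoef m * y ^ m - 4 * (dcoef m * (y/4) ^ m) with hgdef
  have hg : Summable g := hS.sub (hS4.mul_left 4)
  have hnn : ∀ m ∉ Finset.range 4, 0 ≤ g m := by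
    intro m hm
    have hm4 : 4 ≤ m := by simpa using hm
    have h4m : (4:ℝ) ≤ 4 ^ m := by
      calc (4:ℝ) = 4 ^ 1 := (pow_one 4).symm
        _ ≤ 4 ^ m := pow_le_pow_right₀ (by norm_num) (by omega)
    have hym : (0:ℝ) ≤ y ^ m := pow_nonneg hy0 m
    have hkey : 4 * (y/4) ^ m ≤ y ^ m := by
      rw [div_pow]
      rw [mul_div_assoc', div_le_iff₀ (by positivity)]
      nlinarith
    have := mul_le_mul_of_nonneg_left hkey (dcoef_pos m).le
    simp only [hgdef]
    nlinarith
  have hsum := Summable.sum_le_tsum (Finset.range 4) hnn hg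
  have hs : (0:ℝ) < Real.sqrt Real.pi := Real.sqrt_pos.mpr Real.pi_pos
  have hcpos : (0:ℝ) < (2 : ℝ) ^ (-(3/2 : ℝ)) := Real.rpow_pos_of_pos (by norm_num) _
  have hd0 : dcoef 0 = (2 : ℝ) ^ (-(3/2 : ℝ)) / (3/4 * Real.sqrt Real.pi) := by
    unfold dcoef
    norm_num [Gamma_5_2]
  have hd2 : dcoef 2 = (2 : ℝ) ^ (-(3/2 : ℝ)) / (210 * Real.sqrt Real.pi) := by
    unfold dcoef
    rw [show ((2:ℕ):ℝ) + 5/2 = 9/2 by norm_num, Gamma_9_2]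
    norm_num [Nat.factorial]
    field_simp
    ring
  have hd3 : dcoef 3 = (2 : ℝ) ^ (-(3/2 : ℝ)) / (11340 * Real.sqrt Real.pi) := by
    unfold dcoef
    rw [show ((3:ℕ):ℝ) + 5/2 = 11/2 by norm_num, Gamma_11_2]
    norm_num [Nat.factorial]
    field_simp
    ring
  have hexp : ∑ m ∈ Finset.range 4, g m
      = (2 : ℝ) ^ (-(3/2 : ℝ)) / Real.sqrt Real.pi * (y^2/280 + y^3/12096 - 4) := by
    rw [Finset.sum_range_succ, Finset.sum_range_succ, Finset.sum_range_succ,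
      Finset.sum_range_one]
    simp only [hgdef]
    rw [hd0, hd2, hd3]
    field_simp
    ring
  have hpoly : (0:ℝ) ≤ y^2/280 + y^3/12096 - 4 := by
    have h2 : (729:ℝ) ≤ y^2 := by nlinarith
    have h3 : (19683:ℝ) ≤ y^3 := by nlinarith
    linarith
  have hlow : 0 ≤ ∑ m ∈ Finset.range 4, g m := by
    rw [hexp]
    positivity
  have htsub : ∑' m, g m = Dfun y - 4 * Dfun (y/4) := by
    simp only [hgdef]
    rw [Summable.tsum_sub hS (hS4.mul_left 4), tsum_mul_left]
    rfl
  linarith [htsub ▸ (hlow.trans hsum)]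

/-- For all `x ≥ √3·π` and all real `a ≥ 2`, one has
`I_{3/2}(x/a) ≤ (1/4)·a^(−3/2)·I_{3/2}(x)`. -/
theorem besselI_three_halves_div_le (x a : ℝ) (hx : Real.sqrt 3 * Real.pi ≤ x) (ha : 2 ≤ a) :
    besselI (3 / 2) (x / a) ≤ 1 / 4 * a ^ (-(3 / 2 : ℝ)) * besselI (3 / 2) x := by
  have hπ3 := Real.pi_gt_three
  have hs3 : Real.sqrt 3 ^ 2 = 3 := Real.sq_sqrt (by norm_num)
  have hs3pos : (0:ℝ) < Real.sqrt 3 := Real.sqrt_pos.mpr (by norm_num)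
  have hx0 : 0 < x := lt_of_lt_of_le (by positivity) hx
  have ha0 : (0:ℝ) < a := by linarith
  have hxa : 0 < x / a := div_pos hx0 ha0
  have hx27 : (27:ℝ) ≤ x ^ 2 := by
    have hmul := mul_le_mul hx hx (by positivity) hx0.le
    have hss : Real.sqrt 3 * Real.sqrt 3 = 3 := Real.mul_self_sqrt (by norm_num)
    have h9 : (9:ℝ) ≤ Real.pi * Real.pi := by nlinarith
    have heq : Real.sqrt 3 * Real.pi * (Real.sqrt 3 * Real.pi)
        = Real.sqrt 3 * Real.sqrt 3 * (Real.pi * Real.pi) := by ring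
    nlinarith
  rw [besselI_eq x hx0, besselI_eq (x/a) hxa]
  have haa : (4:ℝ) ≤ a ^ 2 := by nlinarith
  have hdiv : (x/a) ^ 2 ≤ x ^ 2 / 4 := by
    rw [div_pow]
    exact div_le_div_of_nonneg_left (sq_nonneg x) (by norm_num) haa
  have h1 : Dfun ((x/a) ^ 2) ≤ Dfun (x ^ 2 / 4) := Dfun_mono (sq_nonneg _) hdiv
  have h2 : 4 * Dfun (x ^ 2 / 4) ≤ Dfun (x ^ 2) := key_ineq _ hx27
  have h3 : Dfun ((x/a) ^ 2) ≤ 1/4 * Dfun (x ^ 2) := by linarith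
  have hpow : (x/a) ^ (3/2 : ℝ) = x ^ (3/2 : ℝ) * a ^ (-(3/2 : ℝ)) := by
    rw [Real.div_rpow hx0.le ha0.le, Real.rpow_neg ha0.le, div_eq_mul_inv]
  calc (x/a) ^ (3/2 : ℝ) * Dfun ((x/a) ^ 2)
      ≤ (x/a) ^ (3/2 : ℝ) * (1/4 * Dfun (x ^ 2)) :=
        mul_le_mul_of_nonneg_left h3 (Real.rpow_nonneg hxa.le _)
    _ = 1 / 4 * a ^ (-(3 / 2 : ℝ)) * (x ^ (3/2 : ℝ) * Dfun (x ^ 2)) := by rw [hpow]; ring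
end

section
/- The number r*_Δ(a) of residues b mod 2a with b² ≡ Δ (mod 4a) satisfies r*_Δ(a) ≤ (2√2/√3)·√a for every positive integer a and every integer Δ ≡ 0, 1 (mod 4). -/
open Finset

private noncomputable def Ncount (n : ℕ) (Δ : ℤ) : ℕ :=
  Nat.card {x : ZMod n // x ^ 2 = (Δ : ZMod n)}

private lemma natCard_le_two {α : Type*} (P : α → Prop) (a b : α)
    (h : ∀ x, P x → x = a ∨ x = b) : Nat.card {x // P x} ≤ 2 := by
  have hsub : {x | P x} ⊆ ({a, b} : Set α) := by
    intro x hx; rcases h x hx with h | h <;> simp [h]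
  calc Nat.card {x // P x} = Set.ncard {x | P x} := rfl
    _ ≤ Set.ncard ({a, b} : Set α) :=
        Set.ncard_le_ncard hsub ((Set.finite_singleton b).insert a)
    _ ≤ 2 := by
        refine le_trans (Set.ncard_insert_le _ _) ?_
        simp [Set.ncard_singleton]

private lemma natCard_le_four {α : Type*} (P : α → Prop) (a b c d : α)
    (h : ∀ x, P x → x = a ∨ x = b ∨ x = c ∨ x = d) : Nat.card {x // P x} ≤ 4 := by
  have hsub : {x | P x} ⊆ ({a, b, c, d} : Set α) := by
    intro x hx; rcases h x hx with h | h | h | h <;> simp [h]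
  calc Nat.card {x // P x} = Set.ncard {x | P x} := rfl
    _ ≤ Set.ncard ({a, b, c, d} : Set α) :=
        Set.ncard_le_ncard hsub
          ((((Set.finite_singleton d).insert c).insert b).insert a)
    _ ≤ 4 := by
        refine le_trans (Set.ncard_insert_le _ _) ?_
        have h2 := Set.ncard_insert_le b ({c, d} : Set α)
        have h3 := Set.ncard_insert_le c ({d} : Set α)
        simp [Set.ncard_singleton] at *
        omega

private lemma natCard_le_one {α : Type*} [Subsingleton α] (P : α → Prop) (a : α) :
    Nat.card {x // P x} ≤ 1 := by
  have := natCard_le_two P a a (fun x _ => Or.inl (Subsingleton.elim _ _))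
  have h1 : ∀ x y : {x // P x}, x = y := fun x y => Subtype.ext (Subsingleton.elim _ _)
  rcases Nat.eq_zero_or_pos (Nat.card {x // P x}) with h | h
  · omega
  · obtain ⟨x⟩ := (Nat.card_pos_iff.mp h).1
    haveI : Subsingleton {x // P x} := ⟨h1⟩
    haveI : Nonempty {x // P x} := ⟨x⟩
    simp [Nat.card_unique]

private lemma sq_eq_iff_dvd (n : ℕ) [NeZero n] (x : ZMod n) (Δ : ℤ) :
    x ^ 2 = (Δ : ZMod n) ↔ (n : ℤ) ∣ (x.val : ℤ) ^ 2 - Δ := by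
  rw [← ZMod.intCast_zmod_eq_zero_iff_dvd]
  push_cast
  rw [ZMod.natCast_val, ZMod.cast_id, sub_eq_zero]

private lemma Ncount_one (Δ : ℤ) : Ncount 1 Δ = 1 := by
  haveI : Nonempty {x : ZMod 1 // x ^ 2 = (Δ : ZMod 1)} :=
    ⟨⟨0, Subsingleton.elim _ _⟩⟩
  haveI : Subsingleton {x : ZMod 1 // x ^ 2 = (Δ : ZMod 1)} :=
    ⟨fun x y => Subtype.ext (Subsingleton.elim _ _)⟩
  exact Nat.card_unique

private lemma Ncount_mul {m n : ℕ} (h : Nat.Coprime m n) (Δ : ℤ) :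
    Ncount (m * n) Δ = Ncount m Δ * Ncount n Δ := by
  let e := ZMod.chineseRemainder h
  have hΔ : e ((Δ : ZMod (m * n))) = ((Δ : ZMod m), (Δ : ZMod n)) := by
    rw [map_intCast]
    exact Prod.ext (Prod.fst_intCast Δ) (Prod.snd_intCast Δ)
  have e1 : {x : ZMod (m * n) // x ^ 2 = (Δ : ZMod (m * n))} ≃
      {y : ZMod m × ZMod n // y.1 ^ 2 = (Δ : ZMod m) ∧ y.2 ^ 2 = (Δ : ZMod n)} :=
    e.toEquiv.subtypeEquiv (fun x => by
      constructor
      · intro hx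
        have h2 := congrArg e hx
        rw [map_pow, hΔ, Prod.ext_iff, Prod.pow_fst, Prod.pow_snd] at h2
        exact h2
      · intro hx
        apply EquivLike.injective e
        rw [map_pow, hΔ, Prod.ext_iff, Prod.pow_fst, Prod.pow_snd]
        exact hx)
  rw [Ncount, Nat.card_congr e1,
    Nat.card_congr (Equiv.subtypeProdEquivProd
      (p := fun y : ZMod m => y ^ 2 = (Δ : ZMod m))
      (q := fun y : ZMod n => y ^ 2 = (Δ : ZMod n))), Nat.card_prod]
  rfl

private lemma natCast_sq_eq (m : ℕ) (Z : ℕ) (Δ : ℤ) (h : (m : ℤ) ∣ (Z : ℤ) ^ 2 - Δ) :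
    ((Z : ZMod m)) ^ 2 = (Δ : ZMod m) := by
  have h2 : (((Z : ℤ) ^ 2 - Δ : ℤ) : ZMod m) = 0 :=
    (ZMod.intCast_zmod_eq_zero_iff_dvd _ _).2 h
  push_cast at h2
  exact sub_eq_zero.mp h2

private lemma dvd_of_sol {n : ℕ} [NeZero n] {x : ZMod n} {Δ : ℤ}
    (hx : x ^ 2 = (Δ : ZMod n)) : (n : ℤ) ∣ (x.val : ℤ) ^ 2 - Δ :=
  (sq_eq_iff_dvd n x Δ).1 hx

/-- If `p ∣ Δ` but `p² ∤ Δ`, no solutions mod `p^e` for `e ≥ 2`. -/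
private lemma Ncount_eq_zero {p : ℕ} (hp : p.Prime) {e : ℕ} (he : 2 ≤ e) {Δ : ℤ}
    (h1 : (p : ℤ) ∣ Δ) (h2 : ¬ ((p : ℤ) ^ 2 ∣ Δ)) : Ncount (p ^ e) Δ = 0 := by
  haveI : NeZero (p ^ e) := ⟨pow_ne_zero e hp.pos.ne'⟩
  rw [Ncount, Nat.card_eq_zero]
  left
  constructor
  rintro ⟨x, hx⟩
  have hdvd := dvd_of_sol hx
  push_cast at hdvd
  have hpe : ((p : ℤ) ^ 2) ∣ (p : ℤ) ^ e := pow_dvd_pow _ he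
  have hpX2 : (p : ℤ) ∣ (x.val : ℤ) ^ 2 := by
    have h3 : (p : ℤ) ∣ (p : ℤ) ^ e := dvd_pow_self _ (by omega)
    have h4 := (h3.trans hdvd).add h1
    simpa using h4
  have hpX : (p : ℤ) ∣ (x.val : ℤ) :=
    (Nat.prime_iff_prime_int.mp hp).dvd_of_dvd_pow hpX2
  apply h2
  have hX2 : (p : ℤ) ^ 2 ∣ (x.val : ℤ) ^ 2 := pow_dvd_pow_of_dvd hpX 2
  have h5 := ((hpe.trans hdvd).neg_right.add hX2)
  simpa using h5

/-- Recursion: solutions mod `p^e` of `x² = p²Δ'` inject into `p` copies of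
solutions mod `p^(e-2)` of `y² = Δ'`. -/
private lemma Ncount_rec {p : ℕ} (hp : p.Prime) {e : ℕ} (he : 2 ≤ e) (Δ' : ℤ) :
    Ncount (p ^ e) ((p : ℤ) ^ 2 * Δ') ≤ p * Ncount (p ^ (e - 2)) Δ' := by
  haveI : NeZero (p ^ e) := ⟨pow_ne_zero e hp.pos.ne'⟩
  haveI : NeZero (p ^ (e - 2)) := ⟨pow_ne_zero _ hp.pos.ne'⟩
  have key : ∀ x : ZMod (p ^ e), x ^ 2 = (((p : ℤ) ^ 2 * Δ' : ℤ) : ZMod (p ^ e)) →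
      ∃ Z : ℕ, x.val = p * Z ∧ Z < p ^ (e - 1) ∧
        ((p ^ (e - 2) : ℕ) : ℤ) ∣ (Z : ℤ) ^ 2 - Δ' := by
    intro x hx
    have hdvd := dvd_of_sol hx
    push_cast at hdvd
    have hpX : (p : ℤ) ∣ (x.val : ℤ) := by
      refine (Nat.prime_iff_prime_int.mp hp).dvd_of_dvd_pow (n := 2) ?_
      have h1 : (p : ℤ) ∣ (p : ℤ) ^ e := dvd_pow_self _ (by omega)
      have h2 : (p : ℤ) ∣ (p : ℤ) ^ 2 * Δ' := (dvd_pow_self _ two_ne_zero).mul_right _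
      have h3 := (h1.trans hdvd).add h2
      simpa using h3
    obtain ⟨Z, hZ⟩ : p ∣ x.val := by exact_mod_cast hpX
    refine ⟨Z, hZ, ?_, ?_⟩
    · have hlt : x.val < p ^ e := x.val_lt
      have : p ^ e = p * p ^ (e - 1) := by
        rw [← pow_succ']
        congr 1
        omega
      rw [hZ, this] at hlt
      exact lt_of_mul_lt_mul_left hlt (Nat.zero_le p)
    · have hfac : ((p : ℤ)) ^ e = (p : ℤ) ^ 2 * (p : ℤ) ^ (e - 2) := by
        rw [← pow_add]
        congr 1
        omega
      rw [hZ, hfac] at hdvd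
      push_cast at hdvd
      have : (p : ℤ) ^ 2 * (p : ℤ) ^ (e - 2) ∣ (p : ℤ) ^ 2 * ((Z : ℤ) ^ 2 - Δ') := by
        convert hdvd using 1
        ring
      have hcancel := (mul_dvd_mul_iff_left (a := (p : ℤ) ^ 2)
        (pow_ne_zero 2 (by exact_mod_cast hp.pos.ne'))).1 this
      exact_mod_cast hcancel
  classical
  choose Zf hZf1 hZf2 hZf3 using key
  set T := {y : ZMod (p ^ (e - 2)) // y ^ 2 = (Δ' : ZMod (p ^ (e - 2)))} × Fin p
  have : Nat.card {x : ZMod (p ^ e) // x ^ 2 = (((p : ℤ) ^ 2 * Δ' : ℤ) : ZMod (p ^ e))} ≤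
      Nat.card T := by
    refine Nat.card_le_card_of_injective (fun x =>
      (⟨((Zf x.1 x.2 : ℕ) : ZMod (p ^ (e - 2))), natCast_sq_eq _ _ _ (hZf3 x.1 x.2)⟩,
        ⟨Zf x.1 x.2 / p ^ (e - 2), ?_⟩)) ?_
    · have h1 := hZf2 x.1 x.2
      refine Nat.div_lt_of_lt_mul ?_
      calc Zf x.1 x.2 < p ^ (e - 1) := h1
        _ = p ^ (e - 2) * p := by rw [← pow_succ]; congr 1; omega
    · intro x y hxy
      rw [Prod.ext_iff, Subtype.ext_iff, Fin.ext_iff] at hxy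
      obtain ⟨h1, h2⟩ := hxy
      simp only at h1 h2
      rw [ZMod.natCast_eq_natCast_iff'] at h1
      have hZeq : Zf x.1 x.2 = Zf y.1 y.2 := by
        conv_lhs => rw [← Nat.div_add_mod (Zf x.1 x.2) (p ^ (e - 2))]
        conv_rhs => rw [← Nat.div_add_mod (Zf y.1 y.2) (p ^ (e - 2))]
        rw [h1, h2]
      have hv : (x.1).val = (y.1).val := by rw [hZf1 x.1 x.2, hZf1 y.1 y.2, hZeq]
      exact Subtype.ext (ZMod.val_injective _ hv)
  calc Ncount (p ^ e) ((p : ℤ) ^ 2 * Δ') ≤ Nat.card T := this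
    _ = p * Ncount (p ^ (e - 2)) Δ' := by
        rw [Nat.card_prod]
        simp [Ncount, Nat.card_eq_fintype_card, mul_comm]

private lemma cast_eq_of_dvd {n : ℕ} [NeZero n] (x : ZMod n) (w : ℤ)
    (h : (n : ℤ) ∣ (x.val : ℤ) - w) : x = (w : ZMod n) := by
  have h2 : (((x.val : ℤ) - w : ℤ) : ZMod n) = 0 :=
    (ZMod.intCast_zmod_eq_zero_iff_dvd _ _).2 h
  push_cast at h2
  rw [ZMod.natCast_val, ZMod.cast_id, sub_eq_zero] at h2
  exact h2

private lemma not_dvd_val_of_sol {p : ℕ} (hp : p.Prime) {e : ℕ} (he : 1 ≤ e) {Δ : ℤ}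
    (hΔ : ¬ ((p : ℤ) ∣ Δ)) {x : ZMod (p ^ e)} [NeZero (p ^ e)]
    (hx : x ^ 2 = (Δ : ZMod (p ^ e))) : ¬ ((p : ℤ) ∣ (x.val : ℤ)) := by
  intro hd
  have hdvd := dvd_of_sol hx
  push_cast at hdvd
  apply hΔ
  have h1 : (p : ℤ) ∣ (p : ℤ) ^ e := dvd_pow_self _ (by omega)
  have h2 : (p : ℤ) ∣ (x.val : ℤ) ^ 2 := Dvd.dvd.trans hd (dvd_pow_self _ two_ne_zero)
  have h3 := ((h1.trans hdvd).neg_right.add h2)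
  simpa using h3

/-- At most 2 square roots of a unit mod an odd prime power. -/
private lemma Ncount_le_two_of_odd {p : ℕ} (hp : p.Prime) (hodd : p ≠ 2) {Δ : ℤ}
    (hΔ : ¬ ((p : ℤ) ∣ Δ)) (e : ℕ) : Ncount (p ^ e) Δ ≤ 2 := by
  rcases Nat.eq_zero_or_pos e with rfl | he
  · rw [pow_zero, Ncount_one]; omega
  haveI : NeZero (p ^ e) := ⟨pow_ne_zero e hp.pos.ne'⟩
  rw [Ncount]
  by_cases hne : ∃ x : ZMod (p ^ e), x ^ 2 = (Δ : ZMod (p ^ e))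
  · obtain ⟨x₀, hx₀⟩ := hne
    refine natCard_le_two _ x₀ (-x₀) ?_
    intro x hx
    have hd := dvd_of_sol hx
    have hd₀ := dvd_of_sol hx₀
    push_cast at hd hd₀
    have hprod : (p : ℤ) ^ e ∣ ((x.val : ℤ) - x₀.val) * ((x.val : ℤ) + x₀.val) := by
      have := hd.sub hd₀
      convert this using 1
      · rfl
      ring
    have hX := not_dvd_val_of_sol hp he hΔ hx
    have hX₀ := not_dvd_val_of_sol hp he hΔ hx₀
    have hpint := Nat.prime_iff_prime_int.mp hp
    by_cases hcase : (p : ℤ) ∣ ((x.val : ℤ) - x₀.val)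
    · -- then p does not divide the sum
      have hsum : ¬ ((p : ℤ) ∣ ((x.val : ℤ) + x₀.val)) := by
        intro hc
        have h2x : (p : ℤ) ∣ 2 * (x.val : ℤ) := by
          have := hcase.add hc
          convert this using 1
          · rfl
          ring
        rcases hpint.dvd_mul.1 h2x with h | h
        · have hp2 : p ∣ 2 := by exact_mod_cast h
          have := (Nat.prime_dvd_prime_iff_eq hp Nat.prime_two).1 hp2
          exact hodd this
        · exact hX h
      have hcop : IsCoprime ((p : ℤ) ^ e) ((x.val : ℤ) + x₀.val) :=
        (hpint.coprime_iff_not_dvd.2 hsum).pow_left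
      have := hcop.dvd_of_dvd_mul_right hprod
      left
      have hx' := cast_eq_of_dvd x ((x₀.val : ℤ)) (by exact_mod_cast this)
      rw [hx']
      push_cast
      rw [ZMod.natCast_val, ZMod.cast_id]
    · have hcop : IsCoprime ((p : ℤ) ^ e) ((x.val : ℤ) - x₀.val) :=
        (hpint.coprime_iff_not_dvd.2 hcase).pow_left
      have hdd : (p : ℤ) ^ e ∣ ((x.val : ℤ) + x₀.val) := hcop.dvd_of_dvd_mul_left hprod
      right
      have hx' := cast_eq_of_dvd x (-(x₀.val : ℤ)) (by
        have : (x.val : ℤ) - (-(x₀.val : ℤ)) = (x.val : ℤ) + x₀.val := by ring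
        rw [this]; exact_mod_cast hdd)
      rw [hx']
      push_cast
      rw [ZMod.natCast_val, ZMod.cast_id]
  · push_neg at hne
    have : IsEmpty {x : ZMod (p ^ e) // x ^ 2 = (Δ : ZMod (p ^ e))} :=
      ⟨fun y => hne y.1 y.2⟩
    rw [Nat.card_of_isEmpty]
    omega

private lemma two_pow_cast (k : ℕ) : (((2 : ℕ) ^ k : ℕ) : ZMod (2 ^ k)) = 0 :=
  ZMod.natCast_self _

/-- At most 4 square roots of an odd number mod `2^k`, `k ≥ 2`. -/
private lemma Ncount_two_le_four {k : ℕ} (hk : 2 ≤ k) {Δ : ℤ}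
    (hΔ : ¬ ((2 : ℤ) ∣ Δ)) : Ncount (2 ^ k) Δ ≤ 4 := by
  haveI : NeZero (2 ^ k) := ⟨pow_ne_zero k two_ne_zero⟩
  rw [Ncount]
  by_cases hne : ∃ x : ZMod (2 ^ k), x ^ 2 = (Δ : ZMod (2 ^ k))
  · obtain ⟨x₀, hx₀⟩ := hne
    have hpowk : ((2 : ZMod (2 ^ k))) ^ k = 0 := by
      have h0 := ZMod.natCast_self (2 ^ k)
      push_cast at h0
      exact h0
    set c : ZMod (2 ^ k) := (2 : ZMod (2 ^ k)) ^ (k - 1) with hc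
    refine natCard_le_four _ x₀ (-x₀) (x₀ + c) (-x₀ + c) ?_
    intro x hx
    have hd := dvd_of_sol hx
    have hd₀ := dvd_of_sol hx₀
    push_cast at hd hd₀
    have hXodd : ¬ ((2 : ℤ) ∣ (x.val : ℤ)) := by
      exact_mod_cast not_dvd_val_of_sol Nat.prime_two (by omega) hΔ hx
    have hYodd : ¬ ((2 : ℤ) ∣ (x₀.val : ℤ)) := by
      exact_mod_cast not_dvd_val_of_sol Nat.prime_two (by omega) hΔ hx₀
    have hprod : (2 : ℤ) ^ k ∣ ((x.val : ℤ) - x₀.val) * ((x.val : ℤ) + x₀.val) := by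
      have := hd.sub hd₀
      convert this using 1
      · rfl
      ring
    obtain ⟨u, hu⟩ : (2 : ℤ) ∣ ((x.val : ℤ) - x₀.val) := by omega
    obtain ⟨v, hv⟩ : (2 : ℤ) ∣ ((x.val : ℤ) + x₀.val) := by omega
    have huv : ¬ ((2:ℤ) ∣ u) ∨ ¬ ((2:ℤ) ∣ v) := by omega
    have hk2 : (2 : ℤ) ^ k = 2 ^ 2 * 2 ^ (k - 2) := by
      rw [← pow_add]; congr 1; omega
    have huvdvd : (2 : ℤ) ^ (k - 2) ∣ u * v := by
      have h4 : (2:ℤ) ^ 2 * 2 ^ (k - 2) ∣ 2 ^ 2 * (u * v) := by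
        rw [← hk2]
        convert hprod using 1
        rw [hu, hv]; ring
      exact (mul_dvd_mul_iff_left (a := (2:ℤ)^2) (by norm_num)).1 h4
    have hint2 : Prime (2 : ℤ) := Int.prime_two
    have hsplit : (2:ℤ) ^ (k - 1) = 2 * 2 ^ (k - 2) := by
      rw [← pow_succ']; congr 1; omega
    have hsplit2 : (2:ℤ) ^ k = 2 ^ (k - 1) * 2 := by
      rw [← pow_succ]; congr 1; omega
    have hmain : (2:ℤ) ^ (k - 1) ∣ ((x.val : ℤ) - x₀.val) ∨
        (2:ℤ) ^ (k - 1) ∣ ((x.val : ℤ) + x₀.val) := by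
      rcases huv with h | h
      · right
        have hcop : IsCoprime ((2:ℤ) ^ (k - 2)) u :=
          (hint2.coprime_iff_not_dvd.2 h).pow_left
        have := hcop.dvd_of_dvd_mul_left huvdvd
        rw [hv, hsplit]
        exact mul_dvd_mul_left 2 this
      · left
        have hcop : IsCoprime ((2:ℤ) ^ (k - 2)) v :=
          (hint2.coprime_iff_not_dvd.2 h).pow_left
        have := hcop.dvd_of_dvd_mul_right huvdvd
        rw [hu, hsplit]
        exact mul_dvd_mul_left 2 this
    rcases hmain with ⟨s, hs⟩ | ⟨s, hs⟩
    · rcases Int.even_or_odd s with ⟨t, ht⟩ | ⟨t, ht⟩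
      · left
        have hxw : x = (((x₀.val : ℤ) + 2 ^ k * t : ℤ) : ZMod (2 ^ k)) := by
          refine cast_eq_of_dvd x _ ?_
          push_cast
          have hz : (x.val : ℤ) - ((x₀.val : ℤ) + 2 ^ k * t) = 0 := by
            rw [hsplit2]; linear_combination hs + (2:ℤ) ^ (k - 1) * ht
          rw [hz]
          exact dvd_zero _
        rw [hxw]
        push_cast [ZMod.natCast_val, ZMod.cast_id, hpowk]
        ring
      · right; right; left
        have hxw : x = (((x₀.val : ℤ) + 2 ^ k * t + 2 ^ (k - 1) : ℤ) : ZMod (2 ^ k)) := by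
          refine cast_eq_of_dvd x _ ?_
          push_cast
          have hz : (x.val : ℤ) - ((x₀.val : ℤ) + 2 ^ k * t + 2 ^ (k - 1)) = 0 := by
            rw [hsplit2]; linear_combination hs + (2:ℤ) ^ (k - 1) * ht
          rw [hz]
          exact dvd_zero _
        rw [hxw]
        push_cast [ZMod.natCast_val, ZMod.cast_id, hpowk]
        rw [hc]
        ring
    · rcases Int.even_or_odd s with ⟨t, ht⟩ | ⟨t, ht⟩
      · right; left
        have hxw : x = ((-(x₀.val : ℤ) + 2 ^ k * t : ℤ) : ZMod (2 ^ k)) := by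
          refine cast_eq_of_dvd x _ ?_
          push_cast
          have hz : (x.val : ℤ) - (-(x₀.val : ℤ) + 2 ^ k * t) = 0 := by
            rw [hsplit2]; linear_combination hs + (2:ℤ) ^ (k - 1) * ht
          rw [hz]
          exact dvd_zero _
        rw [hxw]
        push_cast [ZMod.natCast_val, ZMod.cast_id, hpowk]
        ring
      · right; right; right
        have hxw : x = ((-(x₀.val : ℤ) + 2 ^ k * t + 2 ^ (k - 1) : ℤ) : ZMod (2 ^ k)) := by
          refine cast_eq_of_dvd x _ ?_
          push_cast
          have hz : (x.val : ℤ) - (-(x₀.val : ℤ) + 2 ^ k * t + 2 ^ (k - 1)) = 0 := by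
            rw [hsplit2]; linear_combination hs + (2:ℤ) ^ (k - 1) * ht
          rw [hz]
          exact dvd_zero _
        rw [hxw]
        push_cast [ZMod.natCast_val, ZMod.cast_id, hpowk]
        rw [hc]
        ring
  · push_neg at hne
    have : IsEmpty {x : ZMod (2 ^ k) // x ^ 2 = (Δ : ZMod (2 ^ k))} :=
      ⟨fun y => hne y.1 y.2⟩
    rw [Nat.card_of_isEmpty]
    omega

private lemma Ncount_le_self (n : ℕ) [NeZero n] (Δ : ℤ) : Ncount n Δ ≤ n := by
  rw [Ncount]
  have h := Nat.card_le_card_of_injective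
    (Subtype.val : {x : ZMod n // x ^ 2 = (Δ : ZMod n)} → ZMod n) Subtype.val_injective
  rwa [Nat.card_zmod] at h

private lemma Ncount_four_le {Δ : ℤ} (hΔ : ¬ ((2:ℤ) ∣ Δ)) : Ncount (2 ^ 2) Δ ≤ 2 := by
  haveI : NeZero ((2 : ℕ) ^ 2) := ⟨by norm_num⟩
  rw [Ncount]
  refine natCard_le_two _ 1 3 (fun x hx => ?_)
  have hodd := not_dvd_val_of_sol Nat.prime_two (by norm_num) hΔ hx
  have hlt : x.val < 2 ^ 2 := x.val_lt
  have hv : x.val = 1 ∨ x.val = 3 := by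
    have h2 : ¬ (2 ∣ x.val) := by exact_mod_cast hodd
    omega
  have hcast : ((x.val : ℕ) : ZMod (2 ^ 2)) = x := by rw [ZMod.natCast_val, ZMod.cast_id]
  rcases hv with h | h
  · left; rw [← hcast, h]; norm_num
  · right; rw [← hcast, h]; norm_num

private lemma Ncount_prime_le_two {p : ℕ} (hp : p.Prime) (hodd : p ≠ 2) (Δ : ℤ) :
    Ncount (p ^ 1) Δ ≤ 2 := by
  by_cases h : (p : ℤ) ∣ Δ
  · haveI : NeZero (p ^ 1) := ⟨pow_ne_zero _ hp.pos.ne'⟩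
    rw [Ncount]
    refine natCard_le_two _ 0 0 (fun x hx => Or.inl ?_)
    have hd := dvd_of_sol hx
    push_cast at hd
    have hpX2 : (p : ℤ) ∣ (x.val : ℤ) ^ 2 := by
      have h1 : (p : ℤ) ∣ (p : ℤ) ^ 1 := by rw [pow_one]
      have h3 := (h1.trans hd).add h
      simpa using h3
    have hpX : p ∣ x.val := by
      exact_mod_cast (Nat.prime_iff_prime_int.mp hp).dvd_of_dvd_pow hpX2
    have hlt : x.val < p ^ 1 := x.val_lt
    have hz : x.val = 0 :=
      Nat.eq_zero_of_dvd_of_lt hpX (hlt.trans_eq (pow_one p))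
    refine ZMod.val_injective _ ?_
    rw [hz, ZMod.val_zero]
  · exact Ncount_le_two_of_odd hp hodd h 1

/-- For primes `p ≥ 5`: `N(p^e)² ≤ p^e`. -/
private lemma Ncount_sq_le_big {p : ℕ} (hp : p.Prime) (hp5 : 5 ≤ p) :
    ∀ e, ∀ Δ : ℤ, Ncount (p ^ e) Δ ^ 2 ≤ p ^ e := by
  intro e
  induction e using Nat.strong_induction_on with
  | _ e ih =>
    intro Δ
    match e with
    | 0 => rw [pow_zero, Ncount_one]; norm_num
    | 1 =>
      have h := Ncount_prime_le_two hp (by omega) Δ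
      have h2 : Ncount (p ^ 1) Δ ^ 2 ≤ 2 ^ 2 := Nat.pow_le_pow_left h 2
      rw [pow_one] at *
      omega
    | (e + 2) =>
      by_cases h1 : (p : ℤ) ∣ Δ
      · by_cases h2 : (p : ℤ) ^ 2 ∣ Δ
        · obtain ⟨Δ', rfl⟩ := h2
          have hrec := Ncount_rec hp (e := e + 2) (by omega) Δ'
          rw [Nat.add_sub_cancel] at hrec
          have hih := ih e (by omega) Δ'
          calc Ncount (p ^ (e + 2)) ((p:ℤ) ^ 2 * Δ') ^ 2
              ≤ (p * Ncount (p ^ e) Δ') ^ 2 := Nat.pow_le_pow_left hrec 2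
            _ = p ^ 2 * Ncount (p ^ e) Δ' ^ 2 := by ring
            _ ≤ p ^ 2 * p ^ e := Nat.mul_le_mul_left _ hih
            _ = p ^ (e + 2) := by ring
        · rw [Ncount_eq_zero hp (by omega) h1 h2]
          simp
      · have h := Ncount_le_two_of_odd hp (by omega) h1 (e + 2)
        have h2 : Ncount (p ^ (e + 2)) Δ ^ 2 ≤ 2 ^ 2 := Nat.pow_le_pow_left h 2
        have h3 : p ^ 2 ≤ p ^ (e + 2) := Nat.pow_le_pow_right hp.pos (by omega)
        have h4 : 5 ^ 2 ≤ p ^ 2 := Nat.pow_le_pow_left hp5 2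
        omega

/-- For `p = 3`: `3·N(3^e)² ≤ 4·3^e`. -/
private lemma Ncount_sq_le_three :
    ∀ e, ∀ Δ : ℤ, 3 * Ncount (3 ^ e) Δ ^ 2 ≤ 4 * 3 ^ e := by
  intro e
  induction e using Nat.strong_induction_on with
  | _ e ih =>
    intro Δ
    match e with
    | 0 => rw [pow_zero, Ncount_one]; norm_num
    | 1 =>
      have h := Ncount_prime_le_two Nat.prime_three (by omega) Δ
      have h2 : Ncount (3 ^ 1) Δ ^ 2 ≤ 2 ^ 2 := Nat.pow_le_pow_left h 2
      norm_num at *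
      omega
    | (e + 2) =>
      by_cases h1 : ((3 : ℕ) : ℤ) ∣ Δ
      · by_cases h2 : ((3 : ℕ) : ℤ) ^ 2 ∣ Δ
        · obtain ⟨Δ', rfl⟩ := h2
          have hrec := Ncount_rec Nat.prime_three (e := e + 2) (by omega) Δ'
          rw [Nat.add_sub_cancel] at hrec
          have hih := ih e (by omega) Δ'
          calc 3 * Ncount (3 ^ (e + 2)) (((3:ℕ):ℤ) ^ 2 * Δ') ^ 2
              ≤ 3 * (3 * Ncount (3 ^ e) Δ') ^ 2 := by
                have := Nat.pow_le_pow_left hrec 2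
                omega
            _ = 9 * (3 * Ncount (3 ^ e) Δ' ^ 2) := by ring
            _ ≤ 9 * (4 * 3 ^ e) := Nat.mul_le_mul_left _ hih
            _ = 4 * 3 ^ (e + 2) := by ring
        · rw [Ncount_eq_zero Nat.prime_three (by omega) h1 h2]
          simp
      · have h := Ncount_le_two_of_odd Nat.prime_three (by omega) h1 (e + 2)
        have h2 : Ncount (3 ^ (e + 2)) Δ ^ 2 ≤ 2 ^ 2 := Nat.pow_le_pow_left h 2
        have h3 : 3 ^ 2 ≤ 3 ^ (e + 2) := Nat.pow_le_pow_right (by omega) (by omega)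
        omega

/-- For `p = 2`: `N(2^k)² ≤ 2^(k+1)`. -/
private lemma Ncount_sq_le_two :
    ∀ k, ∀ Δ : ℤ, Ncount (2 ^ k) Δ ^ 2 ≤ 2 ^ (k + 1) := by
  intro k
  induction k using Nat.strong_induction_on with
  | _ k ih =>
    intro Δ
    match k with
    | 0 => rw [pow_zero, Ncount_one]; norm_num
    | 1 =>
      haveI : NeZero ((2:ℕ) ^ 1) := ⟨by norm_num⟩
      have h := Ncount_le_self (2 ^ 1) Δ
      have h2 : Ncount (2 ^ 1) Δ ^ 2 ≤ 2 ^ 2 := Nat.pow_le_pow_left (by omega) 2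
      omega
    | (k + 2) =>
      by_cases h1 : (2 : ℤ) ∣ Δ
      · by_cases h2 : (2 : ℤ) ^ 2 ∣ Δ
        · obtain ⟨Δ', rfl⟩ := h2
          have hrec := Ncount_rec Nat.prime_two (e := k + 2) (by omega) Δ'
          rw [Nat.add_sub_cancel] at hrec
          have hih := ih k (by omega) Δ'
          calc Ncount (2 ^ (k + 2)) ((2:ℤ) ^ 2 * Δ') ^ 2
              ≤ (2 * Ncount (2 ^ k) Δ') ^ 2 := by
                have h3 : ((2:ℕ):ℤ) = (2:ℤ) := by norm_num
                exact Nat.pow_le_pow_left (by exact_mod_cast hrec) 2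
            _ = 4 * Ncount (2 ^ k) Δ' ^ 2 := by ring
            _ ≤ 4 * 2 ^ (k + 1) := Nat.mul_le_mul_left _ hih
            _ = 2 ^ (k + 3) := by ring
        · have hz := Ncount_eq_zero Nat.prime_two (e := k + 2) (by omega)
            (by exact_mod_cast h1) (by exact_mod_cast h2)
          rw [hz]
          simp
      · match k with
        | 0 =>
          have h := Ncount_four_le h1
          have h2 : Ncount (2 ^ 2) Δ ^ 2 ≤ 2 ^ 2 := Nat.pow_le_pow_left h 2
          show Ncount (2 ^ 2) Δ ^ 2 ≤ 2 ^ 3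
          omega
        | (k + 1) =>
          have h := Ncount_two_le_four (k := k + 3) (by omega) h1
          have h2 : Ncount (2 ^ (k + 3)) Δ ^ 2 ≤ 4 ^ 2 := Nat.pow_le_pow_left h 2
          have h3 : (2:ℕ) ^ 4 ≤ 2 ^ (k + 4) := Nat.pow_le_pow_right (by omega) (by omega)
          show Ncount (2 ^ (k + 3)) Δ ^ 2 ≤ 2 ^ (k + 4)
          omega

private lemma Ncount_sq_le_coprime_six :
    ∀ m : ℕ, m ≠ 0 → ¬ 2 ∣ m → ¬ 3 ∣ m → ∀ Δ : ℤ, Ncount m Δ ^ 2 ≤ m := by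
  intro m
  induction m using Nat.strong_induction_on with
  | _ m ih =>
    intro hm h2 h3 Δ
    rcases eq_or_ne m 1 with rfl | hm1
    · rw [Ncount_one]; omega
    · set p := m.minFac with hp
      have hpp : p.Prime := Nat.minFac_prime hm1
      have hpd : p ∣ m := Nat.minFac_dvd m
      have hp2 : p ≠ 2 := fun h => h2 (h ▸ hpd)
      have hp3 : p ≠ 3 := fun h => h3 (h ▸ hpd)
      have hp4 : p ≠ 4 := by intro h; rw [h] at hpp; norm_num at hpp
      have hp5 : 5 ≤ p := by have := hpp.two_le; omega
      set e := m.factorization p with he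
      set m' := ordCompl[p] m with hm'
      have hsplit : p ^ e * m' = m := Nat.ordProj_mul_ordCompl_eq_self m p
      have hcop : Nat.Coprime (p ^ e) m' :=
        Nat.Coprime.pow_left _ (Nat.coprime_ordCompl hpp hm)
      have he1 : 1 ≤ e := (hpp.dvd_iff_one_le_factorization hm).1 hpd
      have hpe1 : 1 < p ^ e := Nat.one_lt_pow (by omega) hpp.one_lt
      have hm'lt : m' < m := Nat.div_lt_self (by omega) hpe1
      have hm'0 : m' ≠ 0 := (Nat.ordCompl_pos p hm).ne'
      have hm'dvd : m' ∣ m := Nat.ordCompl_dvd m p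
      have h2m' : ¬ 2 ∣ m' := fun h => h2 (h.trans hm'dvd)
      have h3m' : ¬ 3 ∣ m' := fun h => h3 (h.trans hm'dvd)
      calc Ncount m Δ ^ 2 = (Ncount (p ^ e) Δ * Ncount m' Δ) ^ 2 := by
            rw [← hsplit, Ncount_mul hcop]
        _ = Ncount (p ^ e) Δ ^ 2 * Ncount m' Δ ^ 2 := by ring
        _ ≤ p ^ e * m' :=
            Nat.mul_le_mul (Ncount_sq_le_big hpp hp5 e Δ) (ih m' hm'lt hm'0 h2m' h3m' Δ)
        _ = m := hsplit

private lemma Ncount_sq_le_odd (m : ℕ) (hm : m ≠ 0) (h2 : ¬ 2 ∣ m) (Δ : ℤ) :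
    3 * Ncount m Δ ^ 2 ≤ 4 * m := by
  set e := m.factorization 3 with he
  set m' := ordCompl[3] m with hm'
  have hsplit : 3 ^ e * m' = m := Nat.ordProj_mul_ordCompl_eq_self m 3
  have hcop : Nat.Coprime (3 ^ e) m' :=
    Nat.Coprime.pow_left _ (Nat.coprime_ordCompl Nat.prime_three hm)
  have h3m' : ¬ 3 ∣ m' := Nat.not_dvd_ordCompl Nat.prime_three hm
  have h2m' : ¬ 2 ∣ m' := fun h => h2 (h.trans (Nat.ordCompl_dvd m 3))
  have hm'0 : m' ≠ 0 := (Nat.ordCompl_pos 3 hm).ne'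
  calc 3 * Ncount m Δ ^ 2 = 3 * (Ncount (3 ^ e) Δ * Ncount m' Δ) ^ 2 := by
        rw [← hsplit, Ncount_mul hcop]
    _ = (3 * Ncount (3 ^ e) Δ ^ 2) * Ncount m' Δ ^ 2 := by ring
    _ ≤ (4 * 3 ^ e) * m' :=
        Nat.mul_le_mul (Ncount_sq_le_three e Δ)
          (Ncount_sq_le_coprime_six m' hm'0 h2m' h3m' Δ)
    _ = 4 * m := by rw [← hsplit]; ring

private lemma Ncount_main (n : ℕ) (hn : n ≠ 0) (Δ : ℤ) :
    3 * Ncount n Δ ^ 2 ≤ 8 * n := by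
  set k := n.factorization 2 with hk
  set m := ordCompl[2] n with hm
  have hsplit : 2 ^ k * m = n := Nat.ordProj_mul_ordCompl_eq_self n 2
  have hcop : Nat.Coprime (2 ^ k) m :=
    Nat.Coprime.pow_left _ (Nat.coprime_ordCompl Nat.prime_two hn)
  have h2m : ¬ 2 ∣ m := Nat.not_dvd_ordCompl Nat.prime_two hn
  have hm0 : m ≠ 0 := (Nat.ordCompl_pos 2 hn).ne'
  calc 3 * Ncount n Δ ^ 2 = Ncount (2 ^ k) Δ ^ 2 * (3 * Ncount m Δ ^ 2) := by
        rw [← hsplit, Ncount_mul hcop]; ring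
    _ ≤ 2 ^ (k + 1) * (4 * m) :=
        Nat.mul_le_mul (Ncount_sq_le_two k Δ) (Ncount_sq_le_odd m hm0 h2m Δ)
    _ = 8 * n := by rw [← hsplit]; ring

private lemma count_range_eq (a : ℕ) (ha : 0 < a) (Δ : ℤ) :
    Ncount (4 * a) Δ =
      2 * ((Finset.range (2 * a)).filter fun b : ℕ =>
        (4 * (a : ℤ)) ∣ (b : ℤ) ^ 2 - Δ).card := by
  haveI : NeZero (4 * a) := ⟨by omega⟩
  have hcast4 : ((4 * a : ℕ) : ℤ) = 4 * (a : ℤ) := by push_cast; ring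
  have hA : Ncount (4 * a) Δ =
      ((Finset.range (4 * a)).filter fun b : ℕ => (4 * (a : ℤ)) ∣ (b : ℤ) ^ 2 - Δ).card := by
    rw [Ncount, Nat.card_eq_fintype_card, Fintype.card_subtype]
    refine Finset.card_bij' (fun x _ => x.val) (fun b _ => ((b : ℕ) : ZMod (4 * a)))
      ?_ ?_ ?_ ?_
    · intro x hx
      rw [Finset.mem_filter] at hx ⊢
      refine ⟨Finset.mem_range.2 x.val_lt, ?_⟩
      have h := dvd_of_sol hx.2
      rwa [hcast4] at h
    · intro b hb
      rw [Finset.mem_filter] at hb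
      rw [Finset.mem_filter]
      refine ⟨Finset.mem_univ _, natCast_sq_eq _ _ _ ?_⟩
      rw [hcast4]
      exact hb.2
    · intro x _
      show ((x.val : ℕ) : ZMod (4 * a)) = x
      rw [ZMod.natCast_val, ZMod.cast_id]
    · intro b hb
      rw [Finset.mem_filter, Finset.mem_range] at hb
      exact ZMod.val_cast_of_lt hb.1
  have hQshift : ∀ b : ℕ, ((4 * (a : ℤ)) ∣ ((2 * a + b : ℕ) : ℤ) ^ 2 - Δ) ↔
      ((4 * (a : ℤ)) ∣ (b : ℤ) ^ 2 - Δ) := by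
    intro b
    have hdiff : ((2 * a + b : ℕ) : ℤ) ^ 2 - Δ =
        ((b : ℤ) ^ 2 - Δ) + (4 * (a : ℤ)) * ((a : ℤ) + b) := by push_cast; ring
    have hmul : (4 * (a : ℤ)) ∣ (4 * (a : ℤ)) * ((a : ℤ) + b) := dvd_mul_right _ _
    rw [hdiff]
    constructor
    · intro h
      have h2 := h.sub hmul
      simpa using h2
    · intro h
      exact dvd_add h hmul
  have hB : ((Finset.range (4 * a)).filter fun b : ℕ => (4 * (a : ℤ)) ∣ (b : ℤ) ^ 2 - Δ).card
      = 2 * ((Finset.range (2 * a)).filter fun b : ℕ =>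
          (4 * (a : ℤ)) ∣ (b : ℤ) ^ 2 - Δ).card := by
    have hsplit : (4 : ℕ) * a = 2 * a + 2 * a := by ring
    rw [hsplit, Finset.range_add, Finset.filter_union, Finset.card_union_of_disjoint, 
      Finset.filter_map, Finset.card_map]
    · have hcong : (Finset.range (2 * a)).filter
          ((fun b : ℕ => (4 * (a : ℤ)) ∣ (b : ℤ) ^ 2 - Δ) ∘ ⇑(addLeftEmbedding (2 * a)))
          = (Finset.range (2 * a)).filter fun b : ℕ => (4 * (a : ℤ)) ∣ (b : ℤ) ^ 2 - Δ := by
        refine Finset.filter_congr ?_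
        intro b _
        simpa [addLeftEmbedding] using hQshift b
      rw [hcong]
      ring
    · rw [Finset.disjoint_left]
      intro b hb hb2
      rw [Finset.mem_filter, Finset.mem_range] at hb
      rw [Finset.mem_filter, Finset.mem_map] at hb2
      obtain ⟨⟨c, hc, hcb⟩, -⟩ := hb2
      have : addLeftEmbedding (2 * a) c = 2 * a + c := rfl
      omega
  rw [hA, hB]


/-- The number `r*_Δ(a)` of residues `b` mod `2a` with `b² ≡ Δ (mod 4a)` satisfies
`r*_Δ(a) ≤ (2√2/√3)·√a` for every positive integer `a` and every `Δ ≡ 0, 1 (mod 4)`. -/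
theorem card_sqrt_discriminant_le (a : ℕ) (ha : 0 < a) (Δ : ℤ)
    (hΔ : Δ % 4 = 0 ∨ Δ % 4 = 1) :
    (((Finset.range (2 * a)).filter fun b : ℕ => (4 * (a : ℤ)) ∣ (b : ℤ) ^ 2 - Δ).card : ℝ) ≤
      2 * Real.sqrt 2 / Real.sqrt 3 * Real.sqrt a := by
  set F := ((Finset.range (2 * a)).filter fun b : ℕ =>
    (4 * (a : ℤ)) ∣ (b : ℤ) ^ 2 - Δ).card with hF
  have h1 := Ncount_main (4 * a) (by omega) Δ
  have h2 := count_range_eq a ha Δ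
  rw [h2, ← hF] at h1
  have hsq : (2 * F) ^ 2 = 4 * F ^ 2 := by ring
  have h4 : 3 * F ^ 2 ≤ 8 * a := by omega
  have hFr : (F : ℝ) ^ 2 ≤ 8 * (a : ℝ) / 3 := by
    rw [le_div_iff₀ (by norm_num : (0:ℝ) < 3)]
    have h5 : ((3 * F ^ 2 : ℕ) : ℝ) ≤ ((8 * a : ℕ) : ℝ) := by exact_mod_cast h4
    push_cast at h5
    linarith
  have hFnn : (0 : ℝ) ≤ (F : ℝ) := Nat.cast_nonneg F
  have hle : (F : ℝ) ≤ Real.sqrt (8 * (a : ℝ) / 3) := by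
    rw [← Real.sqrt_sq hFnn]
    exact Real.sqrt_le_sqrt hFr
  refine hle.trans (le_of_eq ?_)
  have s2 : Real.sqrt 2 ^ 2 = 2 := Real.sq_sqrt (by norm_num)
  have s3 : Real.sqrt 3 ^ 2 = 3 := Real.sq_sqrt (by norm_num)
  have sa : Real.sqrt (a : ℝ) ^ 2 = (a : ℝ) := Real.sq_sqrt (Nat.cast_nonneg a)
  rw [show (8 * (a : ℝ) / 3) = (2 * Real.sqrt 2 / Real.sqrt 3 * Real.sqrt (a : ℝ)) ^ 2 from ?_,
    Real.sqrt_sq (by positivity)]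
  rw [mul_pow, div_pow, mul_pow, s2, s3, sa]
  ring
end

section
/- The Salié sum S_{a,d,D}(n) = Σ_{b mod 2a, b² ≡ dD mod 4a} χ_D([a, b, (b²−dD)/4a]) e(nb/(2a)) satisfies |S_{a,d,D}(n)| ≤ (2√2/√3)·√a for all positive integers a, n, discriminants d, D with dD ≡ 0,1 mod 4. -/
/-- Number of solutions `x` in `[0, m)` of `x² ≡ u (mod m)`. -/
def salieT (m : ℕ) (u : ℤ) : ℕ :=
  ((Finset.range m).filter (fun x : ℕ => (m : ℤ) ∣ (x : ℤ) ^ 2 - u)).card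

lemma salieT_one (u : ℤ) : salieT 1 u = 1 := by
  simp [salieT]

lemma salieT_le (m : ℕ) (u : ℤ) : salieT m u ≤ m := by
  classical
  exact (Finset.card_filter_le _ _).trans_eq (Finset.card_range m)

lemma dvd_sq_sub_sq_of_dvd {m x y : ℤ} (h : m ∣ x - y) : m ∣ x ^ 2 - y ^ 2 := by
  have hxy : x ^ 2 - y ^ 2 = (x - y) * (x + y) := by ring
  rw [hxy]; exact h.mul_right _

lemma dvd_transfer {m u x y : ℤ} (h1 : m ∣ x ^ 2 - u) (hxy : m ∣ x - y) :
    m ∣ y ^ 2 - u := by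
  have h2 := dvd_sq_sub_sq_of_dvd hxy
  have h3 : y ^ 2 - u = (x ^ 2 - u) - (x ^ 2 - y ^ 2) := by ring
  rw [h3]; exact dvd_sub h1 h2

lemma coprime_int_of_prime_not_dvd {p : ℕ} (hp : p.Prime) {A : ℤ} (h : ¬(p : ℤ) ∣ A) :
    IsCoprime (p : ℤ) A := by
  rw [Int.isCoprime_iff_gcd_eq_one]
  by_contra hg
  have h1 : (Int.gcd (p : ℤ) A) ∣ p := by
    have := Int.gcd_dvd_left (a := (p : ℤ)) (b := A)
    exact_mod_cast this
  rcases hp.eq_one_or_self_of_dvd _ h1 with h2 | h2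
  · exact hg h2
  · apply h
    have := Int.gcd_dvd_right (a := (p : ℤ)) (b := A)
    rw [h2] at this; exact_mod_cast this

lemma salie_mem2 {M x c : ℕ} (hM : 0 < M) (hx : x < M)
    (h : M ∣ x + c ∨ x % M = c % M) : x = c % M ∨ x = (M - c % M) % M := by
  rcases h with h | h
  · right
    have h0 : (x + c) % M = 0 := Nat.mod_eq_zero_of_dvd h
    rw [Nat.add_mod] at h0
    have hxm : x % M = x := Nat.mod_eq_of_lt hx
    have hcm : c % M < M := Nat.mod_lt _ hM
    obtain ⟨t, ht⟩ : M ∣ (x % M + c % M) := Nat.dvd_of_mod_eq_zero h0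
    rw [hxm] at ht
    have ht2 : t < 2 := by nlinarith
    interval_cases t
    · have hx0 : x = 0 ∧ c % M = 0 := by omega
      rw [hx0.1, hx0.2, Nat.sub_zero, Nat.mod_self]
    · have hMc : M - c % M = x := by omega
      rw [hMc, Nat.mod_eq_of_lt hx]
  · left; rw [← Nat.mod_eq_of_lt hx, h]

lemma salie_mem4 {M x c : ℕ} (hM : 0 < M) (hx : x < 2 * M)
    (h : M ∣ x + c ∨ x % M = c % M) :
    x = c % M ∨ x = c % M + M ∨ x = (M - c % M) % M ∨ x = (M - c % M) % M + M := by
  have hxm : x % M < M := Nat.mod_lt _ hM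
  have hdm : x = x % M ∨ x = x % M + M := by
    have h1 := Nat.div_add_mod x M
    have hq : x / M < 2 := (Nat.div_lt_iff_lt_mul hM).mpr (by omega)
    interval_cases h3 : (x / M) <;> omega
  have key : x % M = c % M ∨ x % M = (M - c % M) % M := by
    apply salie_mem2 hM hxm
    rcases h with h | h
    · left
      apply Nat.dvd_of_mod_eq_zero
      rw [Nat.mod_add_mod]
      exact Nat.mod_eq_zero_of_dvd h
    · right; rw [Nat.mod_mod_of_dvd _ dvd_rfl, h]
  rcases hdm with h1 | h1 <;> rcases key with h2 | h2
  · exact Or.inl (by omega)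
  · exact Or.inr (Or.inr (Or.inl (by omega)))
  · exact Or.inr (Or.inl (by omega))
  · exact Or.inr (Or.inr (Or.inr (by omega)))

lemma mod_eq_of_int_dvd {M x c : ℕ} (h : (M : ℤ) ∣ (x : ℤ) - (c : ℤ)) :
    x % M = c % M := by
  have h2 : c ≡ x [MOD M] := (Nat.modEq_iff_dvd).mpr h
  exact h2.symm

lemma nat_dvd_add_of_int {M x c : ℕ} (h : (M : ℤ) ∣ (x : ℤ) + (c : ℤ)) :
    M ∣ x + c := by
  have h2 : ((x + c : ℕ) : ℤ) = (x : ℤ) + c := by push_cast; ring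
  rw [← h2] at h
  exact_mod_cast h

/-- card of an explicit 4-element insert chain -/
lemma card_four (a b c d : ℕ) : ({a, b, c, d} : Finset ℕ).card ≤ 4 := by
  apply (Finset.card_insert_le _ _).trans
  apply Nat.succ_le_succ
  apply (Finset.card_insert_le _ _).trans
  apply Nat.succ_le_succ
  apply (Finset.card_insert_le _ _).trans
  simp

lemma card_two (a b : ℕ) : ({a, b} : Finset ℕ).card ≤ 2 := by
  apply (Finset.card_insert_le _ _).trans
  simp

lemma salieT_le_two_of_odd_unit {p k : ℕ} (hp : p.Prime) (hp2 : p ≠ 2) (hk : 1 ≤ k)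
    {u : ℤ} (hu : ¬(p : ℤ) ∣ u) : salieT (p ^ k) u ≤ 2 := by
  classical
  set N := p ^ k with hN
  have hNpos : 0 < N := pow_pos hp.pos k
  have hNZ : (N : ℤ) = (p : ℤ) ^ k := by push_cast [hN]; ring
  have hpN : (p : ℤ) ∣ (N : ℤ) := by
    rw [hNZ]; exact dvd_pow_self _ (by omega)
  set S := (Finset.range N).filter (fun x : ℕ => (N : ℤ) ∣ (x : ℤ) ^ 2 - u) with hS
  rcases S.eq_empty_or_nonempty with hE | ⟨x₀, hx₀⟩
  · simp [salieT, ← hS, hE]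
  have hx₀' := hx₀
  simp only [hS, Finset.mem_filter, Finset.mem_range] at hx₀'
  obtain ⟨hx₀lt, hx₀dvd⟩ := hx₀'
  have hpZ : Prime (p : ℤ) := Int.prime_iff_natAbs_prime.mpr (by simpa using hp)
  -- p does not divide x₀
  have hpx : ∀ x : ℕ, (N : ℤ) ∣ (x : ℤ) ^ 2 - u → ¬(p : ℤ) ∣ (x : ℤ) := by
    intro x hxd hdx
    apply hu
    have h1 : (p : ℤ) ∣ (x : ℤ) ^ 2 := hdx.pow (by omega)
    have h2 : (p : ℤ) ∣ (x : ℤ) ^ 2 - u := dvd_trans hpN hxd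
    have : u = (x : ℤ) ^ 2 - ((x : ℤ) ^ 2 - u) := by ring
    rw [this]; exact dvd_sub h1 h2
  have hsub : S ⊆ {x₀ % N, (N - x₀ % N) % N} := by
    intro x hx
    have hx' := hx
    simp only [hS, Finset.mem_filter, Finset.mem_range] at hx'
    obtain ⟨hxlt, hxdvd⟩ := hx'
    have hd : (N : ℤ) ∣ ((x : ℤ) - x₀) * ((x : ℤ) + x₀) := by
      have : ((x : ℤ) - x₀) * ((x : ℤ) + x₀) = ((x : ℤ) ^ 2 - u) - ((x₀ : ℤ) ^ 2 - u) := by ring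
      rw [this]; exact dvd_sub hxdvd hx₀dvd
    have hclaim : ¬(p : ℤ) ∣ ((x : ℤ) - x₀) ∨ ¬(p : ℤ) ∣ ((x : ℤ) + x₀) := by
      by_contra hcon
      push_neg at hcon
      have h2 : (p : ℤ) ∣ 2 * (x₀ : ℤ) := by
        have he : (2 : ℤ) * (x₀ : ℤ) = ((x : ℤ) + x₀) - ((x : ℤ) - x₀) := by ring
        rw [he]; exact dvd_sub hcon.2 hcon.1
      rcases hpZ.dvd_mul.mp h2 with h3 | h3
      · have : (p : ℕ) ∣ 2 := by exact_mod_cast h3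
        have := (Nat.prime_dvd_prime_iff_eq hp Nat.prime_two).mp this
        exact hp2 this
      · exact hpx x₀ hx₀dvd h3
    have hmem : x = x₀ % N ∨ x = (N - x₀ % N) % N := by
      rcases hclaim with hc | hc
      · -- coprime with x - x₀, so N ∣ x + x₀
        have cop : IsCoprime ((N : ℤ)) ((x : ℤ) - x₀) := by
          rw [hNZ]; exact (coprime_int_of_prime_not_dvd hp hc).pow_left
        have hdd : (N : ℤ) ∣ (x : ℤ) + x₀ := cop.dvd_of_dvd_mul_left hd
        exact salie_mem2 hNpos hxlt (Or.inl (nat_dvd_add_of_int hdd))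
      · have cop : IsCoprime ((N : ℤ)) ((x : ℤ) + x₀) := by
          rw [hNZ]; exact (coprime_int_of_prime_not_dvd hp hc).pow_left
        have hdd : (N : ℤ) ∣ (x : ℤ) - x₀ := by
          apply cop.dvd_of_dvd_mul_left
          rw [mul_comm] at hd; exact hd
        exact salie_mem2 hNpos hxlt (Or.inr (mod_eq_of_int_dvd hdd))
    simpa using hmem
  calc salieT N u = S.card := rfl
    _ ≤ _ := Finset.card_le_card hsub
    _ ≤ 2 := card_two _ _

lemma salieT_le_four_of_two_unit {k : ℕ} (hk : 3 ≤ k) {u : ℤ} (hu : ¬(2 : ℤ) ∣ u) :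
    salieT (2 ^ k) u ≤ 4 := by
  classical
  set M := 2 ^ (k - 1) with hM
  have hMpos : 0 < M := pow_pos (by norm_num) _
  set N := 2 ^ k with hN
  have hNM : N = 2 * M := by
    rw [hN, hM, ← pow_succ']
    congr 1; omega
  have hNZ : (N : ℤ) = 2 * (M : ℤ) := by exact_mod_cast hNM
  have hMZ : (M : ℤ) = (2 : ℤ) ^ (k - 1) := by push_cast [hM]; ring
  have h2N : (2 : ℤ) ∣ (N : ℤ) := ⟨(M : ℤ), hNZ⟩
  set S := (Finset.range N).filter (fun x : ℕ => (N : ℤ) ∣ (x : ℤ) ^ 2 - u) with hS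
  rcases S.eq_empty_or_nonempty with hE | ⟨x₀, hx₀⟩
  · simp [salieT, ← hS, hE]
  have hodd : ∀ x : ℕ, (N : ℤ) ∣ (x : ℤ) ^ 2 - u → ¬(2 : ℤ) ∣ (x : ℤ) := by
    intro x hxd hdx
    apply hu
    have h1 : (2 : ℤ) ∣ (x : ℤ) ^ 2 := hdx.pow (by omega)
    have h2 : (2 : ℤ) ∣ (x : ℤ) ^ 2 - u := dvd_trans h2N hxd
    have : u = (x : ℤ) ^ 2 - ((x : ℤ) ^ 2 - u) := by ring
    rw [this]; exact dvd_sub h1 h2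
  have hx₀' := hx₀
  simp only [hS, Finset.mem_filter, Finset.mem_range] at hx₀'
  obtain ⟨hx₀lt, hx₀dvd⟩ := hx₀'
  have hox₀ : ¬(2 : ℤ) ∣ (x₀ : ℤ) := hodd x₀ hx₀dvd
  have hsub : S ⊆ {x₀ % M, x₀ % M + M, (M - x₀ % M) % M, (M - x₀ % M) % M + M} := by
    intro x hx
    have hx' := hx
    simp only [hS, Finset.mem_filter, Finset.mem_range] at hx'
    obtain ⟨hxlt, hxdvd⟩ := hx'
    have hox : ¬(2 : ℤ) ∣ (x : ℤ) := hodd x hxdvd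
    have hd : (N : ℤ) ∣ ((x : ℤ) - x₀) * ((x : ℤ) + x₀) := by
      have : ((x : ℤ) - x₀) * ((x : ℤ) + x₀) = ((x : ℤ) ^ 2 - u) - ((x₀ : ℤ) ^ 2 - u) := by ring
      rw [this]; exact dvd_sub hxdvd hx₀dvd
    have hclaim : (M : ℤ) ∣ ((x : ℤ) - x₀) ∨ (M : ℤ) ∣ ((x : ℤ) + x₀) := by
      by_cases h4 : (4 : ℤ) ∣ ((x : ℤ) - x₀)
      · -- then x + x₀ = 2 * B' with B' odd; M ∣ x - x₀
        left
        obtain ⟨B', hB'⟩ : (2 : ℤ) ∣ ((x : ℤ) + x₀) := by omega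
        have hB'odd : ¬(2 : ℤ) ∣ B' := by omega
        have hMd : (M : ℤ) ∣ ((x : ℤ) - x₀) * B' := by
          have h1 : (2 : ℤ) * (M : ℤ) ∣ 2 * (((x : ℤ) - x₀) * B') := by
            rw [← hNZ]
            calc (N : ℤ) ∣ ((x : ℤ) - x₀) * ((x : ℤ) + x₀) := hd
              _ = 2 * (((x : ℤ) - x₀) * B') := by rw [hB']; ring
          exact (mul_dvd_mul_iff_left (two_ne_zero)).mp h1
        have cop : IsCoprime ((M : ℤ)) B' := by
          rw [hMZ]; exact (coprime_int_of_prime_not_dvd Nat.prime_two hB'odd).pow_left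
        exact cop.dvd_of_dvd_mul_right hMd
      · right
        obtain ⟨A', hA'⟩ : (2 : ℤ) ∣ ((x : ℤ) - x₀) := by omega
        have hA'odd : ¬(2 : ℤ) ∣ A' := by omega
        have hMd : (M : ℤ) ∣ A' * ((x : ℤ) + x₀) := by
          have h1 : (2 : ℤ) * (M : ℤ) ∣ 2 * (A' * ((x : ℤ) + x₀)) := by
            rw [← hNZ]
            calc (N : ℤ) ∣ ((x : ℤ) - x₀) * ((x : ℤ) + x₀) := hd
              _ = 2 * (A' * ((x : ℤ) + x₀)) := by rw [hA']; ring
          exact (mul_dvd_mul_iff_left (two_ne_zero)).mp h1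
        have cop : IsCoprime ((M : ℤ)) A' := by
          rw [hMZ]; exact (coprime_int_of_prime_not_dvd Nat.prime_two hA'odd).pow_left
        exact cop.dvd_of_dvd_mul_left hMd
    have hmem := salie_mem4 hMpos (by omega : x < 2 * M)
      (by
        rcases hclaim with hc | hc
        · exact Or.inr (mod_eq_of_int_dvd hc)
        · exact Or.inl (nat_dvd_add_of_int hc))
    simpa using hmem
  calc salieT N u = S.card := rfl
    _ ≤ _ := Finset.card_le_card hsub
    _ ≤ 4 := card_four _ _ _ _

lemma salieT_four_le_two {u : ℤ} (hu : ¬(2 : ℤ) ∣ u) : salieT (2 ^ 2) u ≤ 2 := by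
  classical
  have hsub : (Finset.range (2 ^ 2)).filter (fun x : ℕ => ((2 ^ 2 : ℕ) : ℤ) ∣ (x : ℤ) ^ 2 - u)
      ⊆ {1, 3} := by
    intro x hx
    simp only [Finset.mem_filter, Finset.mem_range] at hx
    obtain ⟨hxlt, hxdvd⟩ := hx
    have h2 : (2 : ℤ) ∣ ((2 ^ 2 : ℕ) : ℤ) := by norm_num
    have hox : ¬(2 : ℤ) ∣ (x : ℤ) := by
      intro hdx
      apply hu
      have h1 : (2 : ℤ) ∣ (x : ℤ) ^ 2 := hdx.pow (by omega)
      have h2' : (2 : ℤ) ∣ (x : ℤ) ^ 2 - u := dvd_trans h2 hxdvd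
      have : u = (x : ℤ) ^ 2 - ((x : ℤ) ^ 2 - u) := by ring
      rw [this]; exact dvd_sub h1 h2'
    have : x = 1 ∨ x = 3 := by omega
    simpa using this
  exact (Finset.card_le_card hsub).trans (card_two _ _)

lemma salieT_le_one_of_dvd {p : ℕ} (hp : p.Prime) {u : ℤ} (hu : (p : ℤ) ∣ u) :
    salieT p u ≤ 1 := by
  classical
  have hsub : (Finset.range p).filter (fun x : ℕ => ((p : ℕ) : ℤ) ∣ (x : ℤ) ^ 2 - u)
      ⊆ {0} := by
    intro x hx
    simp only [Finset.mem_filter, Finset.mem_range] at hx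
    obtain ⟨hxlt, hxdvd⟩ := hx
    have h1 : (p : ℤ) ∣ (x : ℤ) ^ 2 := by
      have : (x : ℤ) ^ 2 = ((x : ℤ) ^ 2 - u) + u := by ring
      rw [this]; exact dvd_add hxdvd hu
    have h2 : p ∣ x ^ 2 := by exact_mod_cast h1
    have h3 : p ∣ x := hp.dvd_of_dvd_pow h2
    have : x = 0 := Nat.eq_zero_of_dvd_of_lt h3 hxlt |>.symm ▸ rfl
    simp [Nat.eq_zero_of_dvd_of_lt h3 hxlt]
  exact (Finset.card_le_card hsub).trans (by simp)

lemma salieT_eq_zero {p k : ℕ} (hp : p.Prime) (hk : 2 ≤ k) {u : ℤ}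
    (hu : (p : ℤ) ∣ u) (hu2 : ¬((p : ℤ) ^ 2 ∣ u)) : salieT (p ^ k) u = 0 := by
  classical
  rw [salieT, Finset.card_eq_zero, Finset.filter_eq_empty_iff]
  intro x hx hxdvd
  apply hu2
  have hpk : ((p ^ k : ℕ) : ℤ) = (p : ℤ) ^ k := by push_cast; ring
  rw [hpk] at hxdvd
  have hpN : (p : ℤ) ∣ (p : ℤ) ^ k := dvd_pow_self _ (by omega)
  have h1 : (p : ℤ) ∣ (x : ℤ) ^ 2 := by
    have : (x : ℤ) ^ 2 = ((x : ℤ) ^ 2 - u) + u := by ring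
    rw [this]; exact dvd_add (dvd_trans hpN hxdvd) hu
  have h2 : p ∣ x := hp.dvd_of_dvd_pow (by exact_mod_cast h1)
  have h3 : (p : ℤ) ^ 2 ∣ (x : ℤ) ^ 2 := by
    obtain ⟨y, hy⟩ := h2
    have : (x : ℤ) = p * y := by exact_mod_cast hy
    rw [this]; exact ⟨(y : ℤ) ^ 2, by ring⟩
  have h4 : (p : ℤ) ^ 2 ∣ (x : ℤ) ^ 2 - u := dvd_trans (pow_dvd_pow _ hk) hxdvd
  have : u = (x : ℤ) ^ 2 - ((x : ℤ) ^ 2 - u) := by ring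
  rw [this]; exact dvd_sub h3 h4

lemma salieT_descent {p k : ℕ} (hp : p.Prime) (hk : 2 ≤ k) {u w : ℤ}
    (hw : u = (p : ℤ) ^ 2 * w) : salieT (p ^ k) u ≤ p * salieT (p ^ (k - 2)) w := by
  classical
  have hppos : 0 < p := hp.pos
  set N := p ^ k with hN
  set M2 := p ^ (k - 2) with hM2
  have hM2pos : 0 < M2 := pow_pos hppos _
  have hNM : N = p ^ 2 * M2 := by
    rw [hN, hM2, ← pow_add]; congr 1; omega
  have hNZ : (N : ℤ) = (p : ℤ) ^ 2 * (M2 : ℤ) := by exact_mod_cast hNM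
  have hpN : (p : ℤ) ∣ (N : ℤ) := by
    rw [hNZ]; exact Dvd.dvd.mul_right (dvd_pow_self _ (by omega)) _
  set S := (Finset.range N).filter (fun x : ℕ => (N : ℤ) ∣ (x : ℤ) ^ 2 - u) with hS
  set f : ℕ → ℕ := fun x => (x / p) % M2 with hf
  -- every solution is divisible by p
  have hpx : ∀ x ∈ S, p ∣ x := by
    intro x hx
    simp only [hS, Finset.mem_filter, Finset.mem_range] at hx
    obtain ⟨hxlt, hxdvd⟩ := hx
    have h1 : (p : ℤ) ∣ (x : ℤ) ^ 2 := by
      have he : (x : ℤ) ^ 2 = ((x : ℤ) ^ 2 - u) + (p : ℤ) ^ 2 * w := by rw [← hw]; ring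
      rw [he]
      exact dvd_add (dvd_trans hpN hxdvd) (Dvd.dvd.mul_right (dvd_pow_self _ two_ne_zero) _)
    have h2 : p ∣ x ^ 2 := by exact_mod_cast h1
    exact hp.dvd_of_dvd_pow h2
  -- the M2-divisibility of m² - w for m = x / p
  have hmw : ∀ x ∈ S, (M2 : ℤ) ∣ ((x / p : ℕ) : ℤ) ^ 2 - w := by
    intro x hx
    have hdx := hpx x hx
    simp only [hS, Finset.mem_filter, Finset.mem_range] at hx
    obtain ⟨hxlt, hxdvd⟩ := hx
    have hxm : (x : ℤ) = (p : ℤ) * ((x / p : ℕ) : ℤ) := by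
      exact_mod_cast (Nat.mul_div_cancel' hdx).symm
    have h1 : (p : ℤ) ^ 2 * (M2 : ℤ) ∣ (p : ℤ) ^ 2 * (((x / p : ℕ) : ℤ) ^ 2 - w) := by
      rw [← hNZ]
      have he : (p : ℤ) ^ 2 * (((x / p : ℕ) : ℤ) ^ 2 - w) = (x : ℤ) ^ 2 - u := by
        rw [hw, hxm]; ring
      rw [he]; exact hxdvd
    have hp2ne : ((p : ℤ) ^ 2) ≠ 0 := by positivity
    exact (mul_dvd_mul_iff_left hp2ne).mp h1
  have hcard : S.card ≤ p * (S.image f).card := by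
    apply Finset.card_le_mul_card_image
    intro b _
    -- fiber over b injects into range p via x ↦ x / p / M2
    refine le_trans ?_ (le_of_eq (Finset.card_range p))
    apply Finset.card_le_card_of_injOn (fun x => x / p / M2)
    · intro x hx
      simp only [Finset.mem_coe, Finset.mem_filter] at hx
      obtain ⟨hxS, hfx⟩ := hx
      simp only [hS, Finset.mem_filter, Finset.mem_range] at hxS
      have hxp : x / p < p ^ (k - 1) := by
        apply Nat.div_lt_of_lt_mul
        have e : p * p ^ (k - 1) = N := by rw [hN, ← pow_succ']; congr 1; omega
        omega
      have : x / p / M2 < p := by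
        apply Nat.div_lt_of_lt_mul
        have e2 : M2 * p = p ^ (k - 1) := by rw [hM2, ← pow_succ]; congr 1; omega
        omega
      exact Finset.mem_range.mpr this
    · intro x hx y hy hxy
      simp only [Finset.coe_filter, Set.mem_setOf_eq] at hx hy
      have hdx := hpx x hx.1
      have hdy := hpx y hy.1
      have hq : x / p / M2 = y / p / M2 := hxy
      have hr : x / p % M2 = y / p % M2 := by
        have h0 : f x = f y := by rw [hx.2, hy.2]
        simpa [hf] using h0
      have h1 : x / p = y / p := by
        calc x / p = M2 * (x / p / M2) + x / p % M2 := (Nat.div_add_mod _ _).symm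
          _ = M2 * (y / p / M2) + y / p % M2 := by rw [hq, hr]
          _ = y / p := Nat.div_add_mod _ _
      have ex : p * (x / p) = x := Nat.mul_div_cancel' hdx
      have ey : p * (y / p) = y := Nat.mul_div_cancel' hdy
      rw [h1] at ex
      omega
  have himg : S.image f ⊆ (Finset.range M2).filter
      (fun z : ℕ => (M2 : ℤ) ∣ (z : ℤ) ^ 2 - w) := by
    intro b hb
    obtain ⟨x, hx, rfl⟩ := Finset.mem_image.mp hb
    simp only [Finset.mem_filter, Finset.mem_range]
    constructor
    · exact Nat.mod_lt _ hM2pos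
    · have h1 := hmw x hx
      apply dvd_transfer h1
      have hle : (x / p) % M2 ≤ x / p := Nat.mod_le _ _
      have h2 : M2 ∣ (x / p) - (x / p) % M2 := Nat.dvd_sub_mod _
      have : ((x / p : ℕ) : ℤ) - (((x / p) % M2 : ℕ) : ℤ) = (((x / p) - (x / p) % M2 : ℕ) : ℤ) := by
        omega
      rw [this]
      exact_mod_cast h2
  calc salieT N u = S.card := rfl
    _ ≤ p * (S.image f).card := hcard
    _ ≤ p * salieT M2 w := Nat.mul_le_mul_left p (Finset.card_le_card himg)

lemma salieT_mul_le {m n : ℕ} (h : Nat.Coprime m n) (u : ℤ) :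
    salieT (m * n) u ≤ salieT m u * salieT n u := by
  classical
  rcases Nat.eq_zero_or_pos m with rfl | hm
  · simp [salieT]
  rcases Nat.eq_zero_or_pos n with rfl | hn
  · simp [salieT]
  have key : ((Finset.range (m * n)).filter
      (fun x : ℕ => ((m * n : ℕ) : ℤ) ∣ (x : ℤ) ^ 2 - u)).card ≤
      (((Finset.range m).filter (fun x : ℕ => ((m : ℕ) : ℤ) ∣ (x : ℤ) ^ 2 - u)) ×ˢ
       ((Finset.range n).filter (fun x : ℕ => ((n : ℕ) : ℤ) ∣ (x : ℤ) ^ 2 - u))).card := by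
    apply Finset.card_le_card_of_injOn (fun x => (x % m, x % n))
    · intro x hx
      simp only [Finset.mem_coe, Finset.mem_filter, Finset.mem_range] at hx
      obtain ⟨hxlt, hxdvd⟩ := hx
      have hmn : ((m * n : ℕ) : ℤ) = (m : ℤ) * n := by push_cast; ring
      rw [hmn] at hxdvd
      have hdm : ∀ q : ℕ, 0 < q → (q : ℤ) ∣ (x : ℤ) ^ 2 - u →
          (q : ℤ) ∣ ((x % q : ℕ) : ℤ) ^ 2 - u := by
        intro q hq hdvd
        apply dvd_transfer hdvd
        have h2 : q ∣ x - x % q := Nat.dvd_sub_mod _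
        have hle : x % q ≤ x := Nat.mod_le _ _
        have : (x : ℤ) - ((x % q : ℕ) : ℤ) = ((x - x % q : ℕ) : ℤ) := by omega
        rw [this]; exact_mod_cast h2
      simp only [Finset.mem_coe, Finset.mem_product, Finset.mem_filter, Finset.mem_range]
      exact ⟨⟨Nat.mod_lt _ hm, hdm m hm ((dvd_mul_right (m:ℤ) (n:ℤ)).trans hxdvd)⟩,
             ⟨Nat.mod_lt _ hn, hdm n hn ((dvd_mul_left (n:ℤ) (m:ℤ)).trans hxdvd)⟩⟩
    · intro x hx y hy hxy
      simp only [Finset.coe_filter, Set.mem_setOf_eq, Finset.mem_range] at hx hy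
      have h1 : x % m = y % m ∧ x % n = y % n := by
        constructor <;> [exact congrArg Prod.fst hxy; exact congrArg Prod.snd hxy]
      have key2 : ∀ a b : ℕ, a < m * n → b < m * n → a ≤ b →
          a % m = b % m → a % n = b % n → a = b := by
        intro a b ha hb hab h2 h3
        have hma : m ∣ b - a := (Nat.modEq_iff_dvd' hab).mp h2
        have hna : n ∣ b - a := (Nat.modEq_iff_dvd' hab).mp h3
        have := h.mul_dvd_of_dvd_of_dvd hma hna
        have := Nat.eq_zero_of_dvd_of_lt this (by omega)
        omega
      rcases le_total x y with hle | hle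
      · exact key2 x y hx.1 hy.1 hle h1.1 h1.2
      · exact (key2 y x hy.1 hx.1 hle h1.1.symm h1.2.symm).symm
  rw [salieT, salieT, salieT]
  calc _ ≤ _ := key
    _ = _ := Finset.card_product _ _

lemma salieT_sq_le_pow_of_five_le {p : ℕ} (hp : p.Prime) (hp5 : 5 ≤ p) :
    ∀ k : ℕ, ∀ u : ℤ, salieT (p ^ k) u ^ 2 ≤ p ^ k := by
  intro k
  induction k using Nat.strong_induction_on with
  | _ k ih =>
    intro u
    match k, ih with
    | 0, _ => simp [salieT_one]
    | 1, _ =>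
      have h2 : salieT (p ^ 1) u ≤ 2 := by
        by_cases hu : (p : ℤ) ∣ u
        · rw [pow_one]; exact (salieT_le_one_of_dvd hp hu).trans one_le_two
        · exact salieT_le_two_of_odd_unit (k := 1) hp (by omega) le_rfl hu
      calc salieT (p ^ 1) u ^ 2 ≤ 2 ^ 2 := Nat.pow_le_pow_left h2 2
        _ ≤ p ^ 1 := by rw [pow_one]; omega
    | (k + 2), ih =>
      by_cases hu : (p : ℤ) ∣ u
      · by_cases hu2 : (p : ℤ) ^ 2 ∣ u
        · obtain ⟨w, hw⟩ := hu2
          have hd := salieT_descent (k := k + 2) hp (by omega) hw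
          simp only [Nat.add_sub_cancel] at hd
          have ih' := ih k (by omega) w
          calc salieT (p ^ (k + 2)) u ^ 2 ≤ (p * salieT (p ^ k) w) ^ 2 :=
                Nat.pow_le_pow_left hd 2
            _ = p ^ 2 * salieT (p ^ k) w ^ 2 := by ring
            _ ≤ p ^ 2 * p ^ k := Nat.mul_le_mul_left _ ih'
            _ = p ^ (k + 2) := by ring
        · rw [salieT_eq_zero hp (by omega) hu hu2]
          positivity
      · have h2 := salieT_le_two_of_odd_unit (k := k + 2) hp (by omega) (by omega) hu
        have h5 : 5 ^ (k + 2) ≤ p ^ (k + 2) := Nat.pow_le_pow_left hp5 _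
        have h25 : 25 ≤ 5 ^ (k + 2) := by
          calc (25 : ℕ) = 5 ^ 2 := by norm_num
            _ ≤ 5 ^ (k + 2) := Nat.pow_le_pow_right (by norm_num) (by omega)
        calc salieT (p ^ (k + 2)) u ^ 2 ≤ 2 ^ 2 := Nat.pow_le_pow_left h2 2
          _ ≤ p ^ (k + 2) := by omega

lemma salieT_sq_le_three : ∀ k : ℕ, ∀ u : ℤ, 3 * salieT (3 ^ k) u ^ 2 ≤ 4 * 3 ^ k := by
  intro k
  induction k using Nat.strong_induction_on with
  | _ k ih =>
    intro u
    have hp : Nat.Prime 3 := by norm_num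
    match k, ih with
    | 0, _ => simp [salieT_one]
    | 1, _ =>
      have h2 : salieT (3 ^ 1) u ≤ 2 := by
        by_cases hu : (3 : ℤ) ∣ u
        · rw [pow_one]; exact (salieT_le_one_of_dvd hp (by exact_mod_cast hu)).trans one_le_two
        · exact salieT_le_two_of_odd_unit (k := 1) hp (by omega) le_rfl (by exact_mod_cast hu)
      calc 3 * salieT (3 ^ 1) u ^ 2 ≤ 3 * 2 ^ 2 := by
            exact Nat.mul_le_mul_left _ (Nat.pow_le_pow_left h2 2)
        _ ≤ 4 * 3 ^ 1 := by norm_num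
    | (k + 2), ih =>
      by_cases hu : ((3 : ℕ) : ℤ) ∣ u
      · by_cases hu2 : ((3 : ℕ) : ℤ) ^ 2 ∣ u
        · obtain ⟨w, hw⟩ := hu2
          have hd := salieT_descent (k := k + 2) hp (by omega) hw
          simp only [Nat.add_sub_cancel] at hd
          have ih' := ih k (by omega) w
          calc 3 * salieT (3 ^ (k + 2)) u ^ 2 ≤ 3 * (3 * salieT (3 ^ k) w) ^ 2 := by
                exact Nat.mul_le_mul_left _ (Nat.pow_le_pow_left hd 2)
            _ = 9 * (3 * salieT (3 ^ k) w ^ 2) := by ring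
            _ ≤ 9 * (4 * 3 ^ k) := Nat.mul_le_mul_left _ ih'
            _ = 4 * 3 ^ (k + 2) := by ring
        · rw [salieT_eq_zero hp (by omega) hu hu2]
          simp
      · have h2 := salieT_le_two_of_odd_unit (k := k + 2) hp (by omega) (by omega) hu
        have h9 : 9 ≤ 3 ^ (k + 2) := by
          calc (9 : ℕ) = 3 ^ 2 := by norm_num
            _ ≤ 3 ^ (k + 2) := Nat.pow_le_pow_right (by norm_num) (by omega)
        calc 3 * salieT (3 ^ (k + 2)) u ^ 2 ≤ 3 * 2 ^ 2 := by
              exact Nat.mul_le_mul_left _ (Nat.pow_le_pow_left h2 2)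
          _ ≤ 4 * 3 ^ (k + 2) := by omega

lemma salieT_sq_le_two : ∀ k : ℕ, ∀ u : ℤ, salieT (2 ^ k) u ^ 2 ≤ 2 ^ (k + 1) := by
  intro k
  induction k using Nat.strong_induction_on with
  | _ k ih =>
    intro u
    have hp : Nat.Prime 2 := by norm_num
    match k, ih with
    | 0, _ => simp [salieT_one]
    | 1, _ =>
      have h2 : salieT (2 ^ 1) u ≤ 2 := by
        have := salieT_le (2 ^ 1) u
        omega
      calc salieT (2 ^ 1) u ^ 2 ≤ 2 ^ 2 := Nat.pow_le_pow_left h2 2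
        _ = 2 ^ (1 + 1) := rfl
    | 2, _ =>
      by_cases hu : ((2 : ℕ) : ℤ) ∣ u
      · by_cases hu2 : ((2 : ℕ) : ℤ) ^ 2 ∣ u
        · obtain ⟨w, hw⟩ := hu2
          have hd := salieT_descent (k := 2) hp (by omega) hw
          simp only [Nat.sub_self] at hd
          rw [pow_zero, salieT_one] at hd
          calc salieT (2 ^ 2) u ^ 2 ≤ (2 * 1) ^ 2 := Nat.pow_le_pow_left hd 2
            _ ≤ 2 ^ (2 + 1) := by norm_num
        · rw [salieT_eq_zero hp (by omega) hu hu2]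
          simp
      · have h2 := salieT_four_le_two (by exact_mod_cast hu)
        calc salieT (2 ^ 2) u ^ 2 ≤ 2 ^ 2 := Nat.pow_le_pow_left h2 2
          _ ≤ 2 ^ (2 + 1) := by norm_num
    | (k + 3), ih =>
      by_cases hu : ((2 : ℕ) : ℤ) ∣ u
      · by_cases hu2 : ((2 : ℕ) : ℤ) ^ 2 ∣ u
        · obtain ⟨w, hw⟩ := hu2
          have hd := salieT_descent (k := k + 3) hp (by omega) hw
          have hk1 : k + 3 - 2 = k + 1 := by omega
          rw [hk1] at hd
          have ih' := ih (k + 1) (by omega) w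
          calc salieT (2 ^ (k + 3)) u ^ 2 ≤ (2 * salieT (2 ^ (k + 1)) w) ^ 2 :=
                Nat.pow_le_pow_left hd 2
            _ = 2 ^ 2 * salieT (2 ^ (k + 1)) w ^ 2 := by ring
            _ ≤ 2 ^ 2 * 2 ^ (k + 2) := Nat.mul_le_mul_left _ ih'
            _ = 2 ^ (k + 3 + 1) := by ring
        · rw [salieT_eq_zero hp (by omega) hu hu2]
          simp
      · have h4 := salieT_le_four_of_two_unit (k := k + 3) (by omega) hu
        have h16 : 16 ≤ 2 ^ (k + 3 + 1) := by
          calc (16 : ℕ) = 2 ^ 4 := by norm_num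
            _ ≤ 2 ^ (k + 3 + 1) := Nat.pow_le_pow_right (by norm_num) (by omega)
        calc salieT (2 ^ (k + 3)) u ^ 2 ≤ 4 ^ 2 := Nat.pow_le_pow_left h4 2
          _ ≤ 2 ^ (k + 3 + 1) := by omega

lemma salieT_sq_le_of_coprime_six : ∀ m : ℕ, 0 < m → ¬2 ∣ m → ¬3 ∣ m →
    ∀ u : ℤ, salieT m u ^ 2 ≤ m := by
  intro m
  induction m using Nat.strong_induction_on with
  | _ m ih =>
    intro hm h2 h3 u
    rcases eq_or_lt_of_le (show 1 ≤ m from hm) with h1 | h1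
    · rw [← h1, salieT_one]; norm_num
    have hm1 : m ≠ 1 := by omega
    set p := m.minFac with hpdef
    have hp : p.Prime := Nat.minFac_prime hm1
    have hpm : p ∣ m := Nat.minFac_dvd m
    have hp5 : 5 ≤ p := by
      have h2' : p ≠ 2 := fun h => h2 (h ▸ hpm)
      have h3' : p ≠ 3 := fun h => h3 (h ▸ hpm)
      have h4' : p ≠ 4 := fun h => by rw [h] at hp; norm_num at hp
      have := hp.two_le
      omega
    set v := m.factorization p with hvdef
    set r := m / p ^ v with hrdef
    have hvr : p ^ v * r = m := Nat.ordProj_mul_ordCompl_eq_self m p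
    have hv1 : 1 ≤ v := hp.factorization_pos_of_dvd (by omega) hpm
    have hrm : r ∣ m := Nat.ordCompl_dvd m p
    have hpr : ¬p ∣ r := Nat.not_dvd_ordCompl hp (by omega)
    have hcop : Nat.Coprime (p ^ v) r := ((hp.coprime_iff_not_dvd).mpr hpr).pow_left _
    have hrpos : 0 < r := by
      rcases Nat.eq_zero_or_pos r with h | h
      · rw [h, mul_zero] at hvr; omega
      · exact h
    have hrlt : r < m := by
      have hpv : 2 ≤ p ^ v := by
        calc 2 ≤ p := by omega
          _ = p ^ 1 := (pow_one p).symm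
          _ ≤ p ^ v := Nat.pow_le_pow_right (by omega) hv1
      nlinarith
    have h2r : ¬2 ∣ r := fun h => h2 (h.trans hrm)
    have h3r : ¬3 ∣ r := fun h => h3 (h.trans hrm)
    have hmul : salieT m u ≤ salieT (p ^ v) u * salieT r u := by
      rw [← hvr]; exact salieT_mul_le hcop u
    calc salieT m u ^ 2 ≤ (salieT (p ^ v) u * salieT r u) ^ 2 := Nat.pow_le_pow_left hmul 2
      _ = salieT (p ^ v) u ^ 2 * salieT r u ^ 2 := by ring
      _ ≤ p ^ v * r := Nat.mul_le_mul (salieT_sq_le_pow_of_five_le hp hp5 v u)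
            (ih r hrlt hrpos h2r h3r u)
      _ = m := hvr

lemma salieT_main (m : ℕ) (hm : 0 < m) (u : ℤ) : 3 * salieT m u ^ 2 ≤ 8 * m := by
  set α := m.factorization 2 with hα
  set m' := m / 2 ^ α with hm'def
  have h2 : 2 ^ α * m' = m := Nat.ordProj_mul_ordCompl_eq_self m 2
  have hm'dvd : m' ∣ m := Nat.ordCompl_dvd m 2
  have h2m' : ¬2 ∣ m' := Nat.not_dvd_ordCompl Nat.prime_two (by omega)
  have hm'pos : 0 < m' := by
    rcases Nat.eq_zero_or_pos m' with h | h
    · rw [h, mul_zero] at h2; omega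
    · exact h
  set β := m'.factorization 3 with hβ
  set m'' := m' / 3 ^ β with hm''def
  have h3 : 3 ^ β * m'' = m' := Nat.ordProj_mul_ordCompl_eq_self m' 3
  have hm''dvd : m'' ∣ m' := Nat.ordCompl_dvd m' 3
  have h3m'' : ¬3 ∣ m'' := Nat.not_dvd_ordCompl (by norm_num) (by omega)
  have h2m'' : ¬2 ∣ m'' := fun h => h2m' (h.trans hm''dvd)
  have hm''pos : 0 < m'' := by
    rcases Nat.eq_zero_or_pos m'' with h | h
    · rw [h, mul_zero] at h3; omega
    · exact h
  have cop1 : Nat.Coprime (2 ^ α) m' := (Nat.prime_two.coprime_iff_not_dvd.mpr h2m').pow_left _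
  have cop2 : Nat.Coprime (3 ^ β) m'' :=
    (((by norm_num : Nat.Prime 3).coprime_iff_not_dvd).mpr h3m'').pow_left _
  have hT : salieT m u ≤ salieT (2 ^ α) u * (salieT (3 ^ β) u * salieT m'' u) := by
    calc salieT m u = salieT (2 ^ α * m') u := by rw [h2]
      _ ≤ salieT (2 ^ α) u * salieT m' u := salieT_mul_le cop1 u
      _ = salieT (2 ^ α) u * salieT (3 ^ β * m'') u := by rw [h3]
      _ ≤ salieT (2 ^ α) u * (salieT (3 ^ β) u * salieT m'' u) :=
          Nat.mul_le_mul_left _ (salieT_mul_le cop2 u)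
  have hA : salieT (2 ^ α) u ^ 2 ≤ 2 ^ (α + 1) := salieT_sq_le_two α u
  have hB : 3 * salieT (3 ^ β) u ^ 2 ≤ 4 * 3 ^ β := salieT_sq_le_three β u
  have hC : salieT m'' u ^ 2 ≤ m'' := salieT_sq_le_of_coprime_six m'' hm''pos h2m'' h3m'' u
  calc 3 * salieT m u ^ 2
      ≤ 3 * (salieT (2 ^ α) u * (salieT (3 ^ β) u * salieT m'' u)) ^ 2 :=
        Nat.mul_le_mul_left _ (Nat.pow_le_pow_left hT 2)
    _ = salieT (2 ^ α) u ^ 2 * ((3 * salieT (3 ^ β) u ^ 2) * salieT m'' u ^ 2) := by ring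
    _ ≤ 2 ^ (α + 1) * ((4 * 3 ^ β) * m'') :=
        Nat.mul_le_mul hA (Nat.mul_le_mul hB hC)
    _ = 8 * (2 ^ α * (3 ^ β * m'')) := by ring
    _ = 8 * m := by rw [h3, h2]

open Complex in
/-- The Salié sum `S_{a,d,D}(n) = Σ_{b mod 2a, b² ≡ dD mod 4a} χ_D([a,b,(b²−dD)/4a]) e(nb/2a)`
satisfies `|S_{a,d,D}(n)| ≤ (2√2/√3)·√a` for all positive integers `a, n` and all
discriminants `d, D` with `dD ≡ 0, 1 (mod 4)`.  Here `χ_D` is the genus character on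
positive definite integral binary quadratic forms `[a,b,c]`, taking values in `{−1,0,1}`. -/
theorem salie_sum_bound (χ : ℤ → ℤ → ℤ → ℤ)
    (hχ : ∀ x y z : ℤ, χ x y z = -1 ∨ χ x y z = 0 ∨ χ x y z = 1)
    (a n : ℕ) (ha : 0 < a) (hn : 0 < n) (d D : ℤ) (hdD : d * D % 4 = 0 ∨ d * D % 4 = 1) :
    ‖∑ b ∈ (Finset.range (2 * a)).filter
        (fun b : ℕ => (4 * (a : ℤ)) ∣ (b : ℤ) ^ 2 - d * D),
        (χ (a : ℤ) (b : ℤ) (((b : ℤ) ^ 2 - d * D) / (4 * (a : ℤ))) : ℂ) *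
          Complex.exp (2 * Real.pi * Complex.I * n * b / (2 * a))‖ ≤
      2 * Real.sqrt 2 / Real.sqrt 3 * Real.sqrt a := by
  classical
  set u : ℤ := d * D with hu
  set S : Finset ℕ := (Finset.range (2 * a)).filter
      (fun b : ℕ => (4 * (a : ℤ)) ∣ (b : ℤ) ^ 2 - u) with hSdef
  -- Step 1: the sum is bounded by the number of terms
  have hstep1 : ‖∑ b ∈ S,
      (χ (a : ℤ) (b : ℤ) (((b : ℤ) ^ 2 - u) / (4 * (a : ℤ))) : ℂ) *
        Complex.exp (2 * Real.pi * Complex.I * n * b / (2 * a))‖ ≤ (S.card : ℝ) := by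
    have hterm : ∀ b ∈ S, ‖
        ((χ (a : ℤ) (b : ℤ) (((b : ℤ) ^ 2 - u) / (4 * (a : ℤ))) : ℂ) *
          Complex.exp (2 * Real.pi * Complex.I * n * b / (2 * a)))‖ ≤ 1 := by
      intro b _
      rw [norm_mul]
      have hexp : ‖Complex.exp (2 * Real.pi * Complex.I * n * b / (2 * a))‖ = 1 := by
        have he : (2 * (Real.pi : ℂ) * Complex.I * n * b / (2 * a)) =
            ((2 * Real.pi * n * b / (2 * a) : ℝ) : ℂ) * Complex.I := by
          push_cast
          ring
        rw [he, Complex.norm_exp_ofReal_mul_I]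
      rw [hexp, mul_one]
      rcases hχ (a : ℤ) (b : ℤ) (((b : ℤ) ^ 2 - u) / (4 * (a : ℤ))) with h | h | h <;>
        rw [h] <;> simp
    calc ‖∑ b ∈ S, _‖ ≤ ∑ b ∈ S, ‖
          ((χ (a : ℤ) (b : ℤ) (((b : ℤ) ^ 2 - u) / (4 * (a : ℤ))) : ℂ) *
            Complex.exp (2 * Real.pi * Complex.I * n * b / (2 * a)))‖ :=
        norm_sum_le _ _
      _ ≤ ∑ b ∈ S, (1 : ℝ) := Finset.sum_le_sum hterm
      _ = (S.card : ℝ) := by simp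
  -- Step 2: doubling into solutions mod 4a
  have hstep2 : 2 * S.card ≤ salieT (4 * a) u := by
    set F : Finset ℕ := (Finset.range (4 * a)).filter
        (fun x : ℕ => ((4 * a : ℕ) : ℤ) ∣ (x : ℤ) ^ 2 - u) with hFdef
    have hcast : ((4 * a : ℕ) : ℤ) = 4 * (a : ℤ) := by push_cast; ring
    set S' : Finset ℕ := S.image (· + 2 * a) with hS'def
    have hsub : S ∪ S' ⊆ F := by
      intro x hx
      rcases Finset.mem_union.mp hx with hx | hx
      · simp only [hSdef, Finset.mem_filter, Finset.mem_range] at hx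
        simp only [hFdef, Finset.mem_filter, Finset.mem_range, hcast]
        exact ⟨by omega, hx.2⟩
      · obtain ⟨b, hb, rfl⟩ := Finset.mem_image.mp hx
        simp only [hSdef, Finset.mem_filter, Finset.mem_range] at hb
        simp only [hFdef, Finset.mem_filter, Finset.mem_range, hcast]
        constructor
        · omega
        · have he : ((b + 2 * a : ℕ) : ℤ) ^ 2 - u =
              ((b : ℤ) ^ 2 - u) + (4 * (a : ℤ)) * ((b : ℤ) + a) := by push_cast; ring
          rw [he]
          exact dvd_add hb.2 (Dvd.intro _ rfl)
    have hdisj : Disjoint S S' := by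
      rw [Finset.disjoint_left]
      intro x hx hx'
      simp only [hSdef, Finset.mem_filter, Finset.mem_range] at hx
      obtain ⟨b, hb, hbe⟩ := Finset.mem_image.mp hx'
      omega
    have hcard : (S ∪ S').card = 2 * S.card := by
      rw [Finset.card_union_of_disjoint hdisj, Finset.card_image_of_injective _
        (add_left_injective (2 * a))]
      omega
    calc 2 * S.card = (S ∪ S').card := hcard.symm
      _ ≤ F.card := Finset.card_le_card hsub
      _ = salieT (4 * a) u := rfl
  -- Step 3: the counting bound
  have hstep3 : 3 * S.card ^ 2 ≤ 8 * a := by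
    have h1 := salieT_main (4 * a) (by omega) u
    have h2 : 3 * (2 * S.card) ^ 2 ≤ 3 * salieT (4 * a) u ^ 2 :=
      Nat.mul_le_mul_left _ (Nat.pow_le_pow_left hstep2 2)
    have h3 : (2 * S.card) ^ 2 = 4 * S.card ^ 2 := by ring
    omega
  -- Step 4: conclude over the reals
  have hfinal : (S.card : ℝ) ≤ 2 * Real.sqrt 2 / Real.sqrt 3 * Real.sqrt a := by
    have hrhs : (0 : ℝ) ≤ 2 * Real.sqrt 2 / Real.sqrt 3 * Real.sqrt a := by positivity
    apply le_of_pow_le_pow_left₀ two_ne_zero hrhs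
    have hsq : (2 * Real.sqrt 2 / Real.sqrt 3 * Real.sqrt a) ^ 2 = 8 / 3 * a := by
      rw [mul_pow, div_pow, mul_pow, Real.sq_sqrt (by norm_num : (0:ℝ) ≤ 2),
        Real.sq_sqrt (by norm_num : (0:ℝ) ≤ 3), Real.sq_sqrt (by positivity : (0:ℝ) ≤ (a:ℝ))]
      norm_num
    rw [hsq]
    have h1 : (3 : ℝ) * (S.card : ℝ) ^ 2 ≤ 8 * a := by exact_mod_cast hstep3
    linarith
  exact hstep1.trans hfinal
end
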